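/- arXiv:2212.12026 — 3 statements merged into one kernel-verified Lean document; each statement's English description precedes it below -/
import Mathlib

section
/- The number of representations of a positive integer K as a sum of two squares of integers (counting order and signs) equals 4(N₁(K) − N₃(K)), where N₁(K) and N₃(K) are the numbers of divisors of K congruent to 1 and 3 modulo 4 respectively. -/
open Finset

namespace Jacobi2Sq

open Zsqrtd GaussianInt

local notation "ℤi" => GaussianInt

noncomputable def R (n : ℕ) : ℕ := {z : ℤi | z.norm = (n : ℤ)}.ncard

def χ (d : ℕ) : ℤ := if d % 4 = 1 then 1 else if d % 4 = 3 then -1 else 0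

def S (n : ℕ) : ℤ := ∑ d ∈ n.divisors, χ d

lemma norm_eq' (z : ℤi) : z.norm = z.re ^ 2 + z.im ^ 2 := by
  simp [Zsqrtd.norm_def]; ring

lemma norm_one_iff {z : ℤi} :
    z.norm = 1 ↔ z = ⟨1,0⟩ ∨ z = ⟨-1,0⟩ ∨ z = ⟨0,1⟩ ∨ z = ⟨0,-1⟩ := by
  obtain ⟨a, b⟩ := z
  rw [norm_eq']
  simp only [Zsqrtd.ext_iff]
  constructor
  · intro h
    have ha : -1 ≤ a ∧ a ≤ 1 := by constructor <;> nlinarith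
    have hb : -1 ≤ b ∧ b ≤ 1 := by constructor <;> nlinarith
    obtain ⟨ha1, ha2⟩ := ha; obtain ⟨hb1, hb2⟩ := hb
    interval_cases a <;> interval_cases b <;> simp_all
  · rintro (⟨h1,h2⟩|⟨h1,h2⟩|⟨h1,h2⟩|⟨h1,h2⟩) <;> subst h1 <;> subst h2 <;> norm_num

lemma isUnit_iff' {z : ℤi} : IsUnit z ↔ z.norm = 1 :=
  (Zsqrtd.norm_eq_one_iff' (by norm_num) z).symm

lemma star_dvd_iff {q w : ℤi} : star q ∣ w ↔ q ∣ star w := by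
  constructor
  · rintro ⟨c, rfl⟩; exact ⟨star c, by rw [star_mul, mul_comm, star_star]⟩
  · rintro ⟨c, hc⟩
    exact ⟨star c, by rw [← star_star w, hc, star_mul, mul_comm]⟩

lemma star_natCast' (n : ℕ) : star ((n : ℤi)) = n := by
  ext <;> simp

lemma prime_dvd_of_dvd_norm {q w : ℤi} (hq : Prime q) (h : q ∣ (w.norm : ℤi)) :
    q ∣ w ∨ star q ∣ w := by
  rw [Zsqrtd.norm_eq_mul_conj] at h
  rcases hq.dvd_mul.mp h with h | h
  · exact Or.inl h
  · exact Or.inr (star_dvd_iff.mpr h)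

lemma prime_of_norm_prime {z : ℤi} {p : ℕ} (hp : p.Prime) (h : z.norm = (p : ℤ)) :
    Prime z := by
  rw [← UniqueFactorizationMonoid.irreducible_iff_prime]
  constructor
  · rw [isUnit_iff', h]
    intro hh
    have := hp.two_le
    omega
  · intro a b hab
    have hnorm : a.norm * b.norm = (p : ℤ) := by rw [← Zsqrtd.norm_mul, ← hab, h]
    have hpZ : Prime (p : ℤ) := Nat.prime_iff_prime_int.mp hp
    rcases hpZ.irreducible.isUnit_or_isUnit hnorm.symm with hu | hu
    · exact Or.inl ((Zsqrtd.isUnit_iff_norm_isUnit a).mpr hu)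
    · exact Or.inr ((Zsqrtd.isUnit_iff_norm_isUnit b).mpr hu)

lemma isCoprime_of_norm {x y : ℤi} (h : IsCoprime x.norm y.norm) : IsCoprime x y := by
  obtain ⟨a, b, hab⟩ := h
  refine ⟨(a : ℤi) * star x, (b : ℤi) * star y, ?_⟩
  have := congrArg (fun t : ℤ => (t : ℤi)) hab
  simp only [Int.cast_add, Int.cast_mul, Int.cast_one] at this
  rw [Zsqrtd.norm_eq_mul_conj, Zsqrtd.norm_eq_mul_conj] at this
  calc (a : ℤi) * star x * x + (b : ℤi) * star y * y
      = (a : ℤi) * (x * star x) + (b : ℤi) * (y * star y) := by ring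
    _ = 1 := this

lemma norm_of_associated {x y : ℤi} (h : Associated x y) : x.norm = y.norm := by
  obtain ⟨u, rfl⟩ := h
  rw [Zsqrtd.norm_mul, isUnit_iff'.mp u.isUnit, mul_one]


-- cast dvd helper
lemma natCast_dvd_norm {w : ℤi} {k : ℕ} (h : (k : ℤ) ∣ w.norm) : (k : ℤi) ∣ (w.norm : ℤi) := by
  obtain ⟨c, hc⟩ := h
  exact ⟨(c : ℤi), by rw [hc]; push_cast; ring⟩

/-- Key existence: a Gaussian integer of norm `m*n` with `m,n` coprime factors. -/
lemma exists_factor : ∀ m n : ℕ, Nat.Coprime m n → ∀ w : ℤi,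
    w.norm = (m : ℤ) * n → ∃ u v : ℤi, w = u * v ∧ u.norm = m ∧ v.norm = n := by
  intro m
  induction m using Nat.strong_induction_on with
  | _ m IH =>
  intro n hmn w hw
  rcases Nat.eq_zero_or_pos m with rfl | hm0
  · have hn1 : n = 1 := by simpa [Nat.coprime_zero_left] using hmn
    subst hn1
    have hw0 : w = 0 := by
      have := Zsqrtd.norm_eq_zero_iff (d := -1) (by norm_num) w
      rw [← this]; simpa using hw
    exact ⟨0, 1, by simp [hw0], by simp, by simp⟩
  rcases eq_or_lt_of_le (show 1 ≤ m from hm0) with hm1 | hm2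
  · exact ⟨1, w, by simp, by simp [← hm1], by rw [hw, ← hm1]; push_cast; ring⟩
  -- m ≥ 2
  set p := m.minFac with hp_def
  have hp : p.Prime := Nat.minFac_prime (by omega)
  have hpm : p ∣ m := Nat.minFac_dvd m
  have hpn : ¬ p ∣ n := fun h =>
    Nat.Prime.one_lt hp |>.ne' (Nat.eq_one_of_dvd_coprimes hmn hpm h ▸ rfl)
  haveI : Fact p.Prime := ⟨hp⟩
  by_cases hp3 : p % 4 = 3
  · -- p stays prime, divides w, extract p, reduce m by p^2
    have hq : Prime ((p : ℕ) : ℤi) := GaussianInt.prime_of_nat_prime_of_mod_four_eq_three p hp3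
    have hdvd : ((p : ℕ) : ℤi) ∣ w := by
      have h1 : (p : ℤ) ∣ w.norm := by
        rw [hw]; exact Dvd.dvd.mul_right (Int.natCast_dvd_natCast.mpr hpm) _
      rcases prime_dvd_of_dvd_norm hq (natCast_dvd_norm h1) with h | h
      · exact h
      · rwa [star_natCast'] at h
    obtain ⟨w', rfl⟩ := hdvd
    have hnorm' : (p : ℤ) * p * w'.norm = (m : ℤ) * n := by
      rw [← hw, Zsqrtd.norm_mul, Zsqrtd.norm_natCast]
    -- p^2 ∣ m
    have hp2mn : p ^ 2 ∣ m * n := by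
      have : ((p : ℤ)) ^ 2 ∣ ((m * n : ℕ) : ℤ) := ⟨w'.norm, by push_cast; rw [← hnorm']; ring⟩
      exact_mod_cast Int.natCast_dvd_natCast.mp (by exact_mod_cast this)
    have hcop : Nat.Coprime (p ^ 2) n := (hp.coprime_iff_not_dvd.mpr hpn).pow_left _
    have hp2m : p ^ 2 ∣ m := hcop.dvd_of_dvd_mul_right hp2mn
    obtain ⟨m₂, hm₂⟩ := hp2m
    have h4 : 4 ≤ p ^ 2 := by nlinarith [hp.two_le]
    have hm₂lt : m₂ < m := by nlinarith [hm0]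
    have hcop₂ : Nat.Coprime m₂ n := Nat.Coprime.coprime_dvd_left ⟨p ^ 2, by rw [hm₂]; ring⟩ hmn
    have hw' : w'.norm = (m₂ : ℤ) * n := by
      have hp0 : (0:ℤ) < (p:ℤ) := by exact_mod_cast hp.pos
      have hppos : (0:ℤ) < (p:ℤ) * p := mul_pos hp0 hp0
      have : (p : ℤ) * p * w'.norm = (p : ℤ) * p * ((m₂ : ℤ) * n) := by
        rw [hnorm', hm₂]; push_cast; ring
      exact mul_left_cancel₀ hppos.ne' this
    obtain ⟨u, v, huv, hu, hv⟩ := IH m₂ hm₂lt n hcop₂ w' hw'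
    exact ⟨(p : ℤi) * u, v, by rw [huv]; ring, by
      rw [Zsqrtd.norm_mul, Zsqrtd.norm_natCast, hu, hm₂]; push_cast; ring, hv⟩
  · -- p splits: get q of norm p dividing w
    obtain ⟨a, b, hab⟩ := Nat.Prime.sq_add_sq (p := p) hp3
    set q : ℤi := ⟨(a : ℤ), (b : ℤ)⟩ with hq_def
    have hqnorm : q.norm = (p : ℤ) := by
      rw [Zsqrtd.norm_def]; push_cast [← hab]; ring
    have hqprime : Prime q := prime_of_norm_prime hp hqnorm
    have hdvd : q ∣ w ∨ star q ∣ w := by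
      apply prime_dvd_of_dvd_norm hqprime
      have h1 : (p : ℤ) ∣ w.norm := by
        rw [hw]; exact Dvd.dvd.mul_right (Int.natCast_dvd_natCast.mpr hpm) _
      have hqp : q ∣ ((p : ℕ) : ℤi) := ⟨star q, by
        have := Zsqrtd.norm_eq_mul_conj q
        rw [hqnorm] at this
        exact_mod_cast this⟩
      exact dvd_trans hqp (natCast_dvd_norm h1)
    obtain ⟨q', hq'dvd, hq'norm⟩ : ∃ q' : ℤi, q' ∣ w ∧ q'.norm = (p : ℤ) := by
      rcases hdvd with h | h
      · exact ⟨q, h, hqnorm⟩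
      · exact ⟨star q, h, by rw [Zsqrtd.norm_conj, hqnorm]⟩
    obtain ⟨w', rfl⟩ := hq'dvd
    have hnorm' : (p : ℤ) * w'.norm = (m : ℤ) * n := by
      rw [← hw, Zsqrtd.norm_mul, hq'norm]
    have hpmn : p ∣ m * n := by
      have : ((p : ℤ)) ∣ ((m * n : ℕ) : ℤ) := ⟨w'.norm, by push_cast; rw [← hnorm']⟩
      exact_mod_cast this
    obtain ⟨m₁, hm₁⟩ := hpm
    have hm₁lt : m₁ < m := by nlinarith [hp.two_le]
    have hcop₁ : Nat.Coprime m₁ n := Nat.Coprime.coprime_dvd_left ⟨p, by rw [hm₁]; ring⟩ hmn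
    have hw' : w'.norm = (m₁ : ℤ) * n := by
      have : (p : ℤ) * w'.norm = (p : ℤ) * ((m₁ : ℤ) * n) := by
        rw [hnorm', hm₁]; push_cast; ring
      exact mul_left_cancel₀ (by exact_mod_cast hp.pos.ne') this
    obtain ⟨u, v, huv, hu, hv⟩ := IH m₁ hm₁lt n hcop₁ w' hw'
    exact ⟨q' * u, v, by rw [huv]; ring, by
      rw [Zsqrtd.norm_mul, hq'norm, hu, hm₁]; push_cast; ring, hv⟩


lemma U_ncard : ({z : ℤi | z.norm = 1}).ncard = 4 := by
  classical
  have hset : {z : ℤi | z.norm = 1} =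
      (↑({⟨1,0⟩, ⟨-1,0⟩, ⟨0,1⟩, ⟨0,-1⟩} : Finset ℤi) : Set ℤi) := by
    ext z
    simp only [Set.mem_setOf_eq, Finset.coe_insert, Set.mem_insert_iff,
      Finset.coe_singleton, Set.mem_singleton_iff]
    exact norm_one_iff
  rw [hset, Set.ncard_coe_finset]
  decide

lemma card_U : Nat.card {z : ℤi // z.norm = 1} = 4 :=
  (Nat.card_coe_set_eq {z : ℤi | z.norm = 1}).trans U_ncard

lemma R_one : R 1 = 4 := by
  simpa [R] using U_ncard

/-- Generic counting: if every element of `{norm = n}` is `t * π₀` with `t` a unit-norm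
element, and conversely, then the count is 4. -/
lemma card_eq_four {n : ℕ} (hn : 0 < n) {π₀ : ℤi} (hπ₀ : π₀.norm = (n : ℤ))
    (hsur : ∀ w : ℤi, w.norm = (n : ℤ) → ∃ t : ℤi, t.norm = 1 ∧ w = t * π₀) :
    R n = 4 := by
  have hπne : π₀ ≠ 0 := by
    intro h
    rw [h] at hπ₀
    simp at hπ₀
    omega
  · have e : {z : ℤi // z.norm = 1} ≃ {z : ℤi // z.norm = (n : ℤ)} := by
      refine Equiv.ofBijective (fun t => ⟨t.1 * π₀, by rw [Zsqrtd.norm_mul, t.2, hπ₀, one_mul]⟩) ⟨?_, ?_⟩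
      · rintro ⟨t₁, h₁⟩ ⟨t₂, h₂⟩ h
        have : t₁ * π₀ = t₂ * π₀ := congrArg Subtype.val h
        exact Subtype.ext (mul_right_cancel₀ hπne this)
      · rintro ⟨w, hw⟩
        obtain ⟨t, ht, rfl⟩ := hsur w hw
        exact ⟨⟨t, ht⟩, rfl⟩
    have := Nat.card_congr e
    rw [card_U] at this
    rw [R, ← Nat.card_coe_set_eq]
    exact this.symm


/-- If `u*v` has coprime norm factorization, `gcd (u*v) m` is associated to `u`. -/
lemma gcd_associated {m n : ℕ} (hmn : Nat.Coprime m n) {u v : ℤi}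
    (hu : u.norm = (m : ℤ)) (hv : v.norm = (n : ℤ)) :
    Associated (EuclideanDomain.gcd (u * v) ((m : ℕ) : ℤi)) u := by
  set g := EuclideanDomain.gcd (u * v) ((m : ℕ) : ℤi) with hg
  have hgm : g ∣ ((m : ℕ) : ℤi) := EuclideanDomain.gcd_dvd_right _ _
  have hguv : g ∣ u * v := EuclideanDomain.gcd_dvd_left _ _
  -- norm g divides m^2
  have hnormg : g.norm ∣ ((m : ℤ)) ^ 2 := by
    obtain ⟨c, hc⟩ := hgm
    refine ⟨c.norm, ?_⟩
    have := congrArg Zsqrtd.norm hc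
    rwa [Zsqrtd.norm_mul, Zsqrtd.norm_natCast, ← sq] at this
  have hcop1 : IsCoprime ((m : ℤ) ^ 2) ((n : ℤ)) := by
    have h := Nat.isCoprime_iff_coprime.mpr (hmn.pow_left 2)
    push_cast at h
    exact h
  have hcopgv : IsCoprime g v := by
    apply isCoprime_of_norm
    rw [hv]
    exact hcop1.of_isCoprime_of_dvd_left hnormg
  have hgu : g ∣ u := hcopgv.dvd_of_dvd_mul_right hguv
  have hug : u ∣ g := by
    apply EuclideanDomain.dvd_gcd (dvd_mul_right u v)
    refine ⟨star u, ?_⟩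
    have := Zsqrtd.norm_eq_mul_conj u
    rw [hu] at this
    exact_mod_cast this
  exact associated_of_dvd_dvd hgu hug

lemma gcd_norm {m n : ℕ} (hm : 0 < m) (hn : 0 < n) (hmn : Nat.Coprime m n) {w : ℤi}
    (hw : w.norm = (m : ℤ) * n) :
    (EuclideanDomain.gcd w ((m : ℕ) : ℤi)).norm = (m : ℤ) := by
  obtain ⟨u, v, rfl, hu, hv⟩ := exists_factor m n hmn w hw
  rw [norm_of_associated (gcd_associated hmn hu hv), hu]

/-- Multiplicativity. -/
lemma R_mul {m n : ℕ} (hm : 0 < m) (hn : 0 < n) (hmn : Nat.Coprime m n) :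
    4 * R (m * n) = R m * R n := by
  classical
  have hmZ : ((m : ℤ)) ≠ 0 := by exact_mod_cast hm.ne'
  have hnZ : ((n : ℤ)) ≠ 0 := by exact_mod_cast hn.ne'
  -- the four unit-norm elements
  have hU4 : Nat.card {z : ℤi // z.norm = 1} = 4 := card_U
  -- the bijection
  let A := {z : ℤi // z.norm = ((m * n : ℕ) : ℤ)}
  let B := {z : ℤi // z.norm = ((m : ℕ) : ℤ)}
  let C := {z : ℤi // z.norm = ((n : ℕ) : ℤ)}
  let U := {z : ℤi // z.norm = 1}
  have key : ∀ w : ℤi, w.norm = ((m*n : ℕ) : ℤ) →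
      (EuclideanDomain.gcd w ((m : ℕ) : ℤi)).norm = (m : ℤ) := by
    intro w hw
    exact gcd_norm hm hn hmn (by rw [hw]; push_cast; ring)
  have hgdvd : ∀ w : ℤi, EuclideanDomain.gcd w ((m : ℕ) : ℤi) ∣ w :=
    fun w => EuclideanDomain.gcd_dvd_left _ _
  have hgne : ∀ w : ℤi, w.norm = ((m*n : ℕ) : ℤ) →
      EuclideanDomain.gcd w ((m : ℕ) : ℤi) ≠ 0 := by
    intro w hw h0
    have := key w hw
    rw [h0] at this
    simp at this
    exact hmZ this.symm
  let F : U × A → B × C := fun tw =>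
    let t := tw.1.1
    let w := tw.2.1
    let g := EuclideanDomain.gcd w ((m : ℕ) : ℤi)
    ⟨⟨t * g, by
        rw [Zsqrtd.norm_mul, tw.1.2, key w tw.2.2, one_mul]⟩,
     ⟨star t * (w / g), by
        have hsplit : g * (w / g) = w :=
          EuclideanDomain.mul_div_cancel' (hgne w tw.2.2) (hgdvd w)
        have hnorm : g.norm * (w / g).norm = ((m : ℤ)) * n := by
          rw [← Zsqrtd.norm_mul, hsplit, tw.2.2]; push_cast; ring
        rw [key w tw.2.2] at hnorm
        have : (w / g).norm = (n : ℤ) := mul_left_cancel₀ hmZ hnorm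
        rw [Zsqrtd.norm_mul, Zsqrtd.norm_conj, tw.1.2, this, one_mul]⟩⟩
  have hbij : Function.Bijective F := by
    constructor
    · rintro ⟨⟨t₁, ht₁⟩, ⟨w₁, hw₁⟩⟩ ⟨⟨t₂, ht₂⟩, ⟨w₂, hw₂⟩⟩ hEq
      have h1 : t₁ * EuclideanDomain.gcd w₁ ((m : ℕ) : ℤi)
          = t₂ * EuclideanDomain.gcd w₂ ((m : ℕ) : ℤi) := congrArg (fun x => x.1.1) hEq
      have h2 : star t₁ * (w₁ / EuclideanDomain.gcd w₁ ((m : ℕ) : ℤi))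
          = star t₂ * (w₂ / EuclideanDomain.gcd w₂ ((m : ℕ) : ℤi)) :=
        congrArg (fun x => x.2.1) hEq
      clear hEq
      set g₁ := EuclideanDomain.gcd w₁ ((m : ℕ) : ℤi) with hg₁
      set g₂ := EuclideanDomain.gcd w₂ ((m : ℕ) : ℤi) with hg₂
      have hs₁ : g₁ * (w₁ / g₁) = w₁ := EuclideanDomain.mul_div_cancel' (hgne w₁ hw₁) (hgdvd w₁)
      have hs₂ : g₂ * (w₂ / g₂) = w₂ := EuclideanDomain.mul_div_cancel' (hgne w₂ hw₂) (hgdvd w₂)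
      have htt₁ : t₁ * star t₁ = 1 := by
        have := (Zsqrtd.norm_eq_mul_conj t₁).symm
        rw [ht₁] at this; exact_mod_cast this
      have htt₂ : t₂ * star t₂ = 1 := by
        have := (Zsqrtd.norm_eq_mul_conj t₂).symm
        rw [ht₂] at this; exact_mod_cast this
      have hww : w₁ = w₂ := by
        have this : t₁ * g₁ * (star t₁ * (w₁ / g₁)) = t₂ * g₂ * (star t₂ * (w₂ / g₂)) := by
          rw [h1, h2]
        calc w₁ = (t₁ * star t₁) * (g₁ * (w₁ / g₁)) := by rw [htt₁, hs₁, one_mul]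
          _ = t₁ * g₁ * (star t₁ * (w₁ / g₁)) := by ring
          _ = t₂ * g₂ * (star t₂ * (w₂ / g₂)) := this
          _ = (t₂ * star t₂) * (g₂ * (w₂ / g₂)) := by ring
          _ = w₂ := by rw [htt₂, hs₂, one_mul]
      subst hww
      have h1' : t₁ * g₁ = t₂ * g₁ := h1
      have htt : t₁ = t₂ := mul_right_cancel₀ (hgne w₁ hw₁) h1'
      simp only [Prod.mk.injEq]
      exact ⟨Subtype.ext htt, trivial⟩
    · rintro ⟨⟨u, hu⟩, ⟨v, hv⟩⟩
      have hwnorm : (u * v).norm = ((m * n : ℕ) : ℤ) := by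
        rw [Zsqrtd.norm_mul, hu, hv]; push_cast; ring
      have hassoc : Associated (EuclideanDomain.gcd (u * v) ((m : ℕ) : ℤi)) u :=
        gcd_associated hmn hu hv
      obtain ⟨c, hc⟩ := hassoc
      set g := EuclideanDomain.gcd (u * v) ((m : ℕ) : ℤi) with hg
      have hcnorm : (c : ℤi).norm = 1 := isUnit_iff'.mp c.isUnit
      refine ⟨⟨⟨(c : ℤi), hcnorm⟩, ⟨u * v, hwnorm⟩⟩, ?_⟩
      have hgs : g * ((u*v) / g) = u * v :=
        EuclideanDomain.mul_div_cancel' (hgne _ hwnorm) (hgdvd _)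
      have hcc : (c : ℤi) * star (c : ℤi) = 1 := by
        have := (Zsqrtd.norm_eq_mul_conj (c : ℤi)).symm
        rw [hcnorm] at this; exact_mod_cast this
      have hune : u ≠ 0 := by
        intro h0; rw [h0] at hu; simp at hu; exact hmZ hu.symm
      have hfirst : (c : ℤi) * g = u := by rw [mul_comm]; exact hc
      have hsecond : star (c : ℤi) * ((u*v) / g) = v := by
        apply mul_left_cancel₀ hune
        calc u * (star (c : ℤi) * ((u*v)/g))
            = ((c : ℤi) * g) * (star (c : ℤi) * ((u*v)/g)) := by rw [hfirst]
          _ = ((c : ℤi) * star (c : ℤi)) * (g * ((u*v)/g)) := by ring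
          _ = u * v := by rw [hcc, hgs, one_mul]
      have : F (⟨(c : ℤi), hcnorm⟩, ⟨u * v, hwnorm⟩)
          = (⟨(c:ℤi) * g, by rw [Zsqrtd.norm_mul, hcnorm, key _ hwnorm, one_mul]⟩,
             ⟨star (c:ℤi) * ((u*v) / g), by
               rw [hsecond, hv]⟩) := rfl
      rw [this]
      simp only [Prod.mk.injEq]
      exact ⟨Subtype.ext hfirst, Subtype.ext hsecond⟩
  have hcard : Nat.card (U × A) = Nat.card (B × C) := Nat.card_eq_of_bijective F hbij
  rw [Nat.card_prod, Nat.card_prod] at hcard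
  have hA : Nat.card A = R (m * n) := Nat.card_coe_set_eq _
  have hB : Nat.card B = R m := Nat.card_coe_set_eq _
  have hC : Nat.card C = R n := Nat.card_coe_set_eq _
  rw [hU4, hA, hB, hC] at hcard
  exact hcard

lemma norm_pow (z : ℤi) (k : ℕ) : (z ^ k).norm = z.norm ^ k := by
  induction k with
  | zero => simp
  | succ k ih => rw [pow_succ, pow_succ, Zsqrtd.norm_mul, ih]

section TwoCase

lemma q2_norm : ((⟨1,1⟩ : ℤi)).norm = (2 : ℤ) := by decide

lemma q2_prime : Prime ((⟨1,1⟩ : ℤi)) := prime_of_norm_prime Nat.prime_two (by decide)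

lemma q2_dvd_star : (⟨1,1⟩ : ℤi) ∣ star (⟨1,1⟩ : ℤi) := ⟨⟨0,-1⟩, by decide⟩

lemma two_pump : ∀ k : ℕ, ∀ w : ℤi, w.norm = (2 : ℤ) ^ k →
    ∃ t : ℤi, t.norm = 1 ∧ w = t * (⟨1,1⟩ : ℤi) ^ k := by
  intro k
  induction k with
  | zero => intro w hw; exact ⟨w, by simpa using hw, by simp⟩
  | succ k ih =>
    intro w hw
    have hdvd : (⟨1,1⟩ : ℤi) ∣ w := by
      have h2 : ((2 : ℕ) : ℤi) ∣ (w.norm : ℤi) := by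
        apply natCast_dvd_norm
        rw [hw]; push_cast
        exact dvd_pow_self _ (Nat.succ_ne_zero k)
      have hq2 : (⟨1,1⟩ : ℤi) ∣ ((2 : ℕ) : ℤi) := ⟨star ⟨1,1⟩, by decide⟩
      rcases prime_dvd_of_dvd_norm q2_prime (dvd_trans hq2 h2) with h | h
      · exact h
      · exact dvd_trans q2_dvd_star h
    obtain ⟨w', rfl⟩ := hdvd
    have hw' : w'.norm = (2 : ℤ) ^ k := by
      have h := hw
      rw [Zsqrtd.norm_mul, q2_norm, pow_succ] at h
      exact mul_left_cancel₀ two_ne_zero (h.trans (by ring))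
    obtain ⟨t, ht, rfl⟩ := ih w' hw'
    exact ⟨t, ht, by ring⟩

lemma R_two_pow (k : ℕ) : R (2 ^ k) = 4 := by
  apply card_eq_four (Nat.pow_pos (by norm_num))
  · rw [norm_pow, q2_norm]; push_cast; ring
  · intro w hw
    apply two_pump
    rw [hw]; push_cast; ring

end TwoCase

section ThreeCase

variable {p : ℕ} (hp : p.Prime) (hp3 : p % 4 = 3)

include hp hp3

lemma p3_dvd {w : ℤi} {k : ℕ} (hk : 0 < k) (hw : w.norm = (p : ℤ) ^ k) :
    ((p : ℕ) : ℤi) ∣ w := by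
  haveI : Fact p.Prime := ⟨hp⟩
  have hq : Prime ((p : ℕ) : ℤi) := GaussianInt.prime_of_nat_prime_of_mod_four_eq_three p hp3
  have h1 : ((p : ℕ) : ℤi) ∣ (w.norm : ℤi) := by
    apply natCast_dvd_norm
    rw [hw]
    exact dvd_pow_self _ hk.ne'
  rcases prime_dvd_of_dvd_norm hq h1 with h | h
  · exact h
  · rwa [star_natCast'] at h

lemma p3_pump : ∀ j : ℕ, ∀ w : ℤi, w.norm = (p : ℤ) ^ (2 * j) →
    ∃ t : ℤi, t.norm = 1 ∧ w = t * ((p : ℕ) : ℤi) ^ j := by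
  intro j
  induction j with
  | zero => intro w hw; exact ⟨w, by simpa using hw, by simp⟩
  | succ j ih =>
    intro w hw
    obtain ⟨w', rfl⟩ := p3_dvd hp hp3 (by omega) hw
    have hpZ : ((p : ℤ)) ≠ 0 := by exact_mod_cast hp.pos.ne'
    have hw' : w'.norm = (p : ℤ) ^ (2 * j) := by
      have : (p : ℤ) * (p : ℤ) * w'.norm = (p : ℤ) * (p : ℤ) * (p : ℤ) ^ (2 * j) := by
        rw [← Zsqrtd.norm_natCast (d := -1) p, ← Zsqrtd.norm_mul, hw,
          Zsqrtd.norm_natCast]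
        rw [show 2 * (j + 1) = 2 * j + 2 by ring, pow_add]
        ring
      exact mul_left_cancel₀ (mul_ne_zero hpZ hpZ) this
    obtain ⟨t, ht, rfl⟩ := ih w' hw'
    exact ⟨t, ht, by ring⟩

lemma p3_odd_empty : ∀ j : ℕ, ∀ w : ℤi, w.norm = (p : ℤ) ^ (2 * j + 1) → False := by
  intro j
  induction j with
  | zero =>
    intro w hw
    obtain ⟨w', rfl⟩ := p3_dvd hp hp3 (by omega) hw
    rw [Zsqrtd.norm_mul, Zsqrtd.norm_natCast, pow_one] at hw
    have hpZ : (0 : ℤ) < (p : ℤ) := by exact_mod_cast hp.pos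
    have h1 : (p : ℤ) * w'.norm = 1 := by
      apply mul_left_cancel₀ hpZ.ne'
      rw [← mul_assoc, hw, mul_one]
    have := Int.eq_one_of_mul_eq_one_right (le_of_lt hpZ) h1
    have := hp.two_le
    omega
  | succ j ih =>
    intro w hw
    obtain ⟨w', rfl⟩ := p3_dvd hp hp3 (by omega) hw
    have hpZ : ((p : ℤ)) ≠ 0 := by exact_mod_cast hp.pos.ne'
    have hw' : w'.norm = (p : ℤ) ^ (2 * j + 1) := by
      have : (p : ℤ) * (p : ℤ) * w'.norm = (p : ℤ) * (p : ℤ) * (p : ℤ) ^ (2 * j + 1) := by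
        rw [← Zsqrtd.norm_natCast (d := -1) p, ← Zsqrtd.norm_mul, hw, Zsqrtd.norm_natCast]
        rw [show 2 * (j + 1) + 1 = (2 * j + 1) + 2 by ring, pow_add]
        ring
      exact mul_left_cancel₀ (mul_ne_zero hpZ hpZ) this
    exact ih w' hw'

lemma R_p3_even (j : ℕ) : R (p ^ (2 * j)) = 4 := by
  apply card_eq_four (Nat.pow_pos hp.pos) (π₀ := ((p : ℕ) : ℤi) ^ j)
  · rw [norm_pow, Zsqrtd.norm_natCast]
    push_cast
    ring
  · intro w hw
    have : w.norm = (p : ℤ) ^ (2 * j) := by rw [hw]; push_cast; ring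
    obtain ⟨t, ht, h⟩ := p3_pump hp hp3 j w this
    exact ⟨t, ht, h⟩

lemma R_p3_odd (j : ℕ) : R (p ^ (2 * j + 1)) = 0 := by
  have : {z : ℤi | z.norm = ((p ^ (2*j+1) : ℕ) : ℤ)} = ∅ := by
    ext w
    simp only [Set.mem_setOf_eq, Set.mem_empty_iff_false, iff_false]
    intro hw
    exact p3_odd_empty hp hp3 j w (by rw [hw]; push_cast; ring)
  rw [R, this, Set.ncard_empty]

end ThreeCase


lemma norm_dvd_of_dvd {x y : ℤi} (h : x ∣ y) : x.norm ∣ y.norm := by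
  obtain ⟨c, rfl⟩ := h
  rw [Zsqrtd.norm_mul]
  exact dvd_mul_right _ _

section OneCase

lemma not_dvd_star {p : ℕ} (hp : p.Prime) (hp1 : p % 4 = 1) {a b : ℤ}
    (ha : a ^ 2 + b ^ 2 = (p : ℤ)) :
    ¬ ((⟨a,b⟩ : ℤi) ∣ star (⟨a,b⟩ : ℤi)) := by
  intro h
  have hpZ : Prime ((p : ℕ) : ℤ) := Nat.prime_iff_prime_int.mp hp
  have hsum : (⟨a,b⟩ : ℤi) ∣ (⟨2*a, 0⟩ : ℤi) := by
    have heq : (⟨a,b⟩ : ℤi) + star (⟨a,b⟩ : ℤi) = (⟨2*a, 0⟩ : ℤi) := by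
      ext <;> simp [Zsqrtd.re_star, Zsqrtd.im_star] <;> ring
    rw [← heq]
    exact dvd_add dvd_rfl h
  have hnormdvd : (p : ℤ) ∣ (2*a) * (2*a) := by
    have h1 := norm_dvd_of_dvd hsum
    have h2 : ((⟨a,b⟩ : ℤi)).norm = (p : ℤ) := by rw [Zsqrtd.norm_def]; linarith [ha]
    have h3 : ((⟨2*a,0⟩ : ℤi)).norm = (2*a) * (2*a) := by rw [Zsqrtd.norm_def]; ring
    rwa [h2, h3] at h1
  have hodd : ¬ ((p : ℤ) ∣ 2) := by
    intro h2
    have h3 : (p : ℕ) ∣ 2 := by exact_mod_cast h2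
    have h4 := Nat.le_of_dvd two_pos h3
    have h5 := hp.two_le
    interval_cases p <;> omega
  have hpa : (p : ℤ) ∣ a := by
    rcases hpZ.dvd_mul.mp hnormdvd with h' | h' <;>
    · rcases hpZ.dvd_mul.mp h' with h'' | h''
      · exact absurd h'' hodd
      · exact h''
  have hpb : (p : ℤ) ∣ b := by
    have h1 : (p : ℤ) ∣ b ^ 2 := by
      have : b ^ 2 = (p : ℤ) - a ^ 2 := by linarith [ha]
      rw [this]
      exact dvd_sub dvd_rfl (by obtain ⟨c, rfl⟩ := hpa; exact ⟨p * c^2, by ring⟩)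
    rw [sq] at h1
    rcases hpZ.dvd_mul.mp h1 with h' | h' <;> exact h'
  obtain ⟨a', rfl⟩ := hpa
  obtain ⟨b', rfl⟩ := hpb
  have hp1' : (1 : ℤ) = (p : ℤ) * (a'^2 + b'^2) := by
    have hpne : ((p : ℕ) : ℤ) ≠ 0 := by exact_mod_cast hp.pos.ne'
    apply mul_left_cancel₀ hpne
    linear_combination -ha
  have : (p : ℤ) ∣ 1 := ⟨a'^2 + b'^2, hp1'⟩
  have h2 := Int.le_of_dvd one_pos this
  have := hp.two_le
  omega

/-- Hard case: injectivity helper. -/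
lemma pi_a_eq {π : ℤi} (hπprime : Prime π) (hstprime : Prime (star π))
    (hnd : ¬ π ∣ star π) (hπ0 : π ≠ 0) (hst0 : star π ≠ 0) :
    ∀ k a b : ℕ, a ≤ b → b ≤ k → ∀ t s : ℤi, t.norm = 1 → s.norm = 1 →
    t * π ^ a * (star π) ^ (k - a) = s * π ^ b * (star π) ^ (k - b) →
    a = b ∧ t = s := by
  intro k a b hab hbk t s ht hs hEq
  have hnd' : ∀ j : ℕ, ∀ u : ℤi, u.norm = 1 → ¬ (π ∣ u * (star π) ^ j) := by
    intro j u hu hdvd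
    rcases hπprime.dvd_mul.mp hdvd with h | h
    · exact hπprime.not_unit (isUnit_of_dvd_unit h (isUnit_iff'.mpr hu))
    · exact hnd (hπprime.dvd_of_dvd_pow h)
  have hcancel : t * (star π) ^ (b - a) = s * π ^ (b - a) := by
    have h1 : π ^ a * ((star π) ^ (k - b) * (t * (star π) ^ (b - a)))
        = π ^ a * ((star π) ^ (k - b) * (s * π ^ (b - a))) := by
      have e1 : k - a = (k - b) + (b - a) := by omega
      have e2 : b = a + (b - a) := by omega
      calc π ^ a * ((star π) ^ (k - b) * (t * (star π) ^ (b - a)))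
          = t * π ^ a * (star π) ^ ((k-b) + (b-a)) := by rw [pow_add]; ring
        _ = t * π ^ a * (star π) ^ (k - a) := by rw [← e1]
        _ = s * π ^ b * (star π) ^ (k - b) := hEq
        _ = s * π ^ (a + (b - a)) * (star π) ^ (k - b) := by rw [← e2]
        _ = π ^ a * ((star π) ^ (k - b) * (s * π ^ (b - a))) := by rw [pow_add]; ring
    have h2 := mul_left_cancel₀ (pow_ne_zero a hπ0) h1
    exact mul_left_cancel₀ (pow_ne_zero _ hst0) h2
  have hab' : a = b := by
    by_contra hne
    have hlt : 0 < b - a := by omega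
    have hdvd : π ∣ t * (star π) ^ (b - a) := by
      rw [hcancel]
      exact Dvd.dvd.mul_left (dvd_pow_self π hlt.ne') s
    exact hnd' _ t ht hdvd
  refine ⟨hab', ?_⟩
  subst hab'
  simp only [Nat.sub_self, pow_zero, mul_one] at hcancel
  exact hcancel

lemma R_p1 {p : ℕ} (hp : p.Prime) (hp1 : p % 4 = 1) (k : ℕ) :
    R (p ^ k) = 4 * (k + 1) := by
  haveI : Fact p.Prime := ⟨hp⟩
  obtain ⟨a₀, b₀, hab⟩ := Nat.Prime.sq_add_sq (p := p) (by omega)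
  set π : ℤi := ⟨(a₀ : ℤ), (b₀ : ℤ)⟩ with hπ_def
  have haZ : ((a₀ : ℤ)) ^ 2 + ((b₀ : ℤ)) ^ 2 = (p : ℤ) := by exact_mod_cast hab
  have hπnorm : π.norm = (p : ℤ) := by rw [Zsqrtd.norm_def]; push_cast; linarith [haZ]
  have hstnorm : (star π).norm = (p : ℤ) := by rw [Zsqrtd.norm_conj, hπnorm]
  have hπprime : Prime π := prime_of_norm_prime hp hπnorm
  have hstprime : Prime (star π) := prime_of_norm_prime hp hstnorm
  have hnd : ¬ π ∣ star π := not_dvd_star hp hp1 haZ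
  have hπ0 : π ≠ 0 := hπprime.ne_zero
  have hst0 : star π ≠ 0 := hstprime.ne_zero
  have hpZ0 : ((p : ℤ)) ≠ 0 := by exact_mod_cast hp.pos.ne'
  -- surjectivity pump
  have pump : ∀ k : ℕ, ∀ w : ℤi, w.norm = (p : ℤ) ^ k →
      ∃ t : ℤi, t.norm = 1 ∧ ∃ a : ℕ, a ≤ k ∧ w = t * π ^ a * (star π) ^ (k - a) := by
    intro k
    induction k with
    | zero => intro w hw; exact ⟨w, by simpa using hw, 0, le_refl _, by simp⟩
    | succ k ih =>
      intro w hw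
      have hdvd : π ∣ w ∨ star π ∣ w := by
        apply prime_dvd_of_dvd_norm hπprime
        have h1 : ((p : ℕ) : ℤi) ∣ (w.norm : ℤi) := by
          apply natCast_dvd_norm
          rw [hw]
          exact dvd_pow_self _ (Nat.succ_ne_zero k)
        have hπp : π ∣ ((p : ℕ) : ℤi) := ⟨star π, by
          have := Zsqrtd.norm_eq_mul_conj π
          rw [hπnorm] at this
          exact_mod_cast this⟩
        exact dvd_trans hπp h1
      rcases hdvd with ⟨w', rfl⟩ | ⟨w', rfl⟩
      · have hw' : w'.norm = (p : ℤ) ^ k := by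
          rw [Zsqrtd.norm_mul, hπnorm, pow_succ'] at hw
          exact mul_left_cancel₀ hpZ0 hw
        obtain ⟨t, ht, a, hak, rfl⟩ := ih w' hw'
        refine ⟨t, ht, a + 1, by omega, ?_⟩
        have : k + 1 - (a + 1) = k - a := by omega
        rw [this, pow_succ]
        ring
      · have hw' : w'.norm = (p : ℤ) ^ k := by
          rw [Zsqrtd.norm_mul, hstnorm, pow_succ'] at hw
          exact mul_left_cancel₀ hpZ0 hw
        obtain ⟨t, ht, a, hak, rfl⟩ := ih w' hw'
        refine ⟨t, ht, a, by omega, ?_⟩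
        have : k + 1 - a = (k - a) + 1 := by omega
        rw [this, pow_succ]
        ring
  -- the bijection
  let G : {z : ℤi // z.norm = 1} × Fin (k + 1) → {w : ℤi // w.norm = ((p ^ k : ℕ) : ℤ)} :=
    fun ta => ⟨ta.1.1 * π ^ (ta.2 : ℕ) * (star π) ^ (k - (ta.2 : ℕ)), by
      rw [Zsqrtd.norm_mul, Zsqrtd.norm_mul, ta.1.2, norm_pow, norm_pow, hπnorm, hstnorm,
        one_mul, ← pow_add]
      have : (ta.2 : ℕ) + (k - (ta.2 : ℕ)) = k := by omega
      rw [this]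
      push_cast
      ring⟩
  have hGbij : Function.Bijective G := by
    constructor
    · rintro ⟨⟨t, ht⟩, a⟩ ⟨⟨s, hs⟩, b⟩ hEq
      have hEq' : t * π ^ (a : ℕ) * (star π) ^ (k - (a : ℕ))
          = s * π ^ (b : ℕ) * (star π) ^ (k - (b : ℕ)) := congrArg Subtype.val hEq
      have hak : (a : ℕ) ≤ k := by omega
      have hbk : (b : ℕ) ≤ k := by omega
      have key : (a : ℕ) = (b : ℕ) ∧ t = s := by
        rcases le_total (a : ℕ) (b : ℕ) with h | h
        · exact pi_a_eq hπprime hstprime hnd hπ0 hst0 k a b h hbk t s ht hs hEq'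
        · have := pi_a_eq hπprime hstprime hnd hπ0 hst0 k b a h hak s t hs ht hEq'.symm
          exact ⟨this.1.symm, this.2.symm⟩
      obtain ⟨h1, h2⟩ := key
      simp only [Prod.mk.injEq]
      exact ⟨Subtype.ext h2, Fin.ext h1⟩
    · rintro ⟨w, hw⟩
      have hw' : w.norm = (p : ℤ) ^ k := by rw [hw]; push_cast; ring
      obtain ⟨t, ht, a, hak, rfl⟩ := pump k w hw'
      exact ⟨⟨⟨t, ht⟩, ⟨a, by omega⟩⟩, rfl⟩
  have hcard := Nat.card_eq_of_bijective G hGbij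
  rw [Nat.card_prod, card_U, Nat.card_eq_fintype_card, Fintype.card_fin] at hcard
  rw [R, ← Nat.card_coe_set_eq]
  exact hcard.symm

end OneCase

lemma chi_mul (m n : ℕ) : χ (m * n) = χ m * χ n := by
  unfold χ
  have hmn : (m * n) % 4 = (m % 4) * (n % 4) % 4 := Nat.mul_mod m n 4
  have hm : m % 4 = 0 ∨ m % 4 = 1 ∨ m % 4 = 2 ∨ m % 4 = 3 := by omega
  have hn : n % 4 = 0 ∨ n % 4 = 1 ∨ n % 4 = 2 ∨ n % 4 = 3 := by omega
  rcases hm with h1|h1|h1|h1 <;> rcases hn with h2|h2|h2|h2 <;>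
    rw [hmn, h1, h2] <;> norm_num

def chiA : ArithmeticFunction ℤ := ⟨χ, by norm_num [χ]⟩

lemma chiA_mult : chiA.IsMultiplicative :=
  ⟨by norm_num [chiA, χ], fun {m n} _ => chi_mul m n⟩

lemma S_eq (n : ℕ) : S n = ((ArithmeticFunction.zeta : ArithmeticFunction ℕ) * chiA) n := by
  rw [ArithmeticFunction.coe_zeta_mul_apply]
  rfl

lemma S_mul {m n : ℕ} (h : Nat.Coprime m n) : S (m * n) = S m * S n := by
  rw [S_eq, S_eq, S_eq]
  exact ((ArithmeticFunction.isMultiplicative_zeta.natCast).mul chiA_mult).map_mul_of_coprime h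

lemma S_one : S 1 = 1 := by simp [S, χ]

lemma S_prime_pow {p : ℕ} (hp : p.Prime) (k : ℕ) :
    S (p ^ k) = ∑ j ∈ range (k + 1), χ (p ^ j) := by
  rw [S, Nat.divisors_prime_pow hp, Finset.sum_map]
  rfl

lemma S_two_pow (k : ℕ) : S (2 ^ k) = 1 := by
  rw [S_prime_pow Nat.prime_two]
  induction k with
  | zero => simp [χ]
  | succ k ih =>
    rw [Finset.sum_range_succ, ih]
    have h0 : χ (2 ^ (k + 1)) = 0 := by
      have hmod : 2 ^ (k + 1) % 4 = 2 ∨ 2 ^ (k + 1) % 4 = 0 := by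
        cases k with
        | zero => left; norm_num
        | succ k =>
          right
          have h4 : (4:ℕ) ∣ 2 ^ (k + 2) := by
            have h22 : (2:ℕ) ^ 2 ∣ 2 ^ (k + 2) := Nat.pow_dvd_pow 2 (by omega)
            simpa using h22
          omega
      unfold χ
      rcases hmod with h | h <;> rw [h] <;> norm_num
    rw [h0, add_zero]

lemma S_p1_pow {p : ℕ} (hp : p.Prime) (hp1 : p % 4 = 1) (k : ℕ) : S (p ^ k) = k + 1 := by
  rw [S_prime_pow hp]
  have hχ : ∀ j, χ (p ^ j) = 1 := by
    intro j
    unfold χ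
    have h : p ^ j % 4 = 1 := by rw [Nat.pow_mod, hp1]; norm_num
    rw [h]; norm_num
  simp [hχ]

lemma three_pow_mod (j : ℕ) : 3 ^ j % 4 = if Even j then 1 else 3 := by
  induction j with
  | zero => simp
  | succ j ihj =>
    rw [pow_succ, Nat.mul_mod, ihj]
    rcases Nat.even_or_odd j with h | h
    · rw [if_pos h, if_neg (by simp [Nat.even_add_one, h])]
    · rw [if_neg (Nat.not_even_iff_odd.mpr h),
        if_pos (Nat.even_add_one.mpr (Nat.not_even_iff_odd.mpr h))]

lemma alt_sum (k : ℕ) : ∑ j ∈ range (k + 1), ((-1 : ℤ)) ^ j = if Even k then 1 else 0 := by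
  induction k with
  | zero => simp
  | succ k ihk =>
    rw [Finset.sum_range_succ, ihk]
    rcases Nat.even_or_odd k with h | h
    · rw [if_pos h, if_neg (by simp [Nat.even_add_one, h]), Odd.neg_one_pow (Even.add_one h)]
      ring
    · have he : Even (k + 1) := Nat.even_add_one.mpr (Nat.not_even_iff_odd.mpr h)
      rw [if_neg (Nat.not_even_iff_odd.mpr h), if_pos he, Even.neg_one_pow he]
      ring

lemma S_p3_pow {p : ℕ} (hp : p.Prime) (hp3 : p % 4 = 3) (k : ℕ) :
    S (p ^ k) = if Even k then 1 else 0 := by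
  rw [S_prime_pow hp]
  have hχ : ∀ j, χ (p ^ j) = (-1 : ℤ) ^ j := by
    intro j
    have h3 : p ^ j % 4 = if Even j then 1 else 3 := by
      rw [Nat.pow_mod, hp3]; exact three_pow_mod j
    unfold χ
    rcases Nat.even_or_odd j with h | h
    · rw [h3, if_pos h, Even.neg_one_pow h]; norm_num
    · rw [h3, if_neg (Nat.not_even_iff_odd.mpr h), Odd.neg_one_pow h]; norm_num
  rw [Finset.sum_congr rfl (fun j _ => hχ j)]
  exact alt_sum k

lemma main : ∀ K : ℕ, 0 < K → (R K : ℤ) = 4 * S K := by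
  intro K
  induction K using Nat.recOnPosPrimePosCoprime with
  | prime_pow p k hp hk =>
    intro _
    by_cases h2 : p = 2
    · subst h2
      rw [R_two_pow, S_two_pow]
      norm_num
    · have hodd : p % 2 = 1 := Nat.odd_iff.mp (hp.odd_of_ne_two h2)
      have hp4 : p % 4 = 1 ∨ p % 4 = 3 := by omega
      rcases hp4 with h1 | h3
      · rw [R_p1 hp h1, S_p1_pow hp h1]
        push_cast
        ring
      · rcases Nat.even_or_odd k with h | h
        · obtain ⟨j, rfl⟩ := h
          rw [show j + j = 2 * j by ring, R_p3_even hp h3 j, S_p3_pow hp h3]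
          simp [Nat.even_mul]
        · obtain ⟨j, rfl⟩ := h
          rw [R_p3_odd hp h3 j, S_p3_pow hp h3]
          have : ¬ Even (2 * j + 1) := by simp [Nat.even_add_one]
          rw [if_neg this]
          norm_num
  | zero => intro h; omega
  | one => intro _; rw [R_one, S_one]; norm_num
  | coprime a b ha hb hab iha ihb =>
    intro _
    have h4 : ((4 * R (a * b) : ℕ) : ℤ) = ((R a * R b : ℕ) : ℤ) := by
      exact_mod_cast congrArg (Nat.cast : ℕ → ℤ) (R_mul (by omega) (by omega) hab)
    push_cast at h4
    have hSa := iha (by omega)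
    have hSb := ihb (by omega)
    have hS := S_mul hab
    rw [hSa, hSb] at h4
    rw [hS]
    linarith


lemma S_filter (K : ℕ) :
    S K = ((K.divisors.filter (fun d => d % 4 = 1)).card : ℤ)
        - ((K.divisors.filter (fun d => d % 4 = 3)).card : ℤ) := by
  have hpt : ∀ d : ℕ, χ d = (if d % 4 = 1 then (1:ℤ) else 0) - (if d % 4 = 3 then (1:ℤ) else 0) := by
    intro d
    unfold χ
    split_ifs with h1 h3 h3 <;> omega
  rw [S, Finset.sum_congr rfl (fun d _ => hpt d), Finset.sum_sub_distrib,
    Finset.sum_boole, Finset.sum_boole]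

lemma ncard_eq_R (K : ℕ) :
    {p : ℤ × ℤ | p.1 ^ 2 + p.2 ^ 2 = (K : ℤ)}.ncard = R K := by
  have himg : {p : ℤ × ℤ | p.1 ^ 2 + p.2 ^ 2 = (K : ℤ)}
      = (fun z : ℤi => (z.re, z.im)) '' {z : ℤi | z.norm = (K : ℤ)} := by
    ext ⟨x, y⟩
    simp only [Set.mem_setOf_eq, Set.mem_image]
    constructor
    · intro h
      exact ⟨⟨x, y⟩, by rw [norm_eq']; exact h, rfl⟩
    · rintro ⟨z, hz, hzz⟩
      rw [norm_eq'] at hz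
      have h1 : z.re = x := congrArg Prod.fst hzz
      have h2 : z.im = y := congrArg Prod.snd hzz
      rw [← h1, ← h2]
      exact hz
  rw [R, himg, Set.ncard_image_of_injective]
  intro a b h
  have h1 : a.re = b.re := congrArg Prod.fst h
  have h2 : a.im = b.im := congrArg Prod.snd h
  exact Zsqrtd.ext h1 h2


end Jacobi2Sq

open Finset

/-- Jacobi's two-squares theorem: the number of representations of a positive
integer `K` as an ordered sum of two squares of integers equals
`4 * (N₁(K) - N₃(K))` where `Nⱼ(K)` counts divisors of `K` congruent to `j` mod 4. -/
theorem jacobi_two_squares (K : ℕ) (hK : 0 < K) :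
    (({p : ℤ × ℤ | p.1 ^ 2 + p.2 ^ 2 = (K : ℤ)}.ncard : ℤ)) =
      4 * (((K.divisors.filter (fun d => d % 4 = 1)).card : ℤ)
            - ((K.divisors.filter (fun d => d % 4 = 3)).card : ℤ)) := by
  calc (({p : ℤ × ℤ | p.1 ^ 2 + p.2 ^ 2 = (K : ℤ)}.ncard : ℤ))
      = ((Jacobi2Sq.R K : ℕ) : ℤ) := by rw [Jacobi2Sq.ncard_eq_R K]
    _ = 4 * Jacobi2Sq.S K := Jacobi2Sq.main K hK
    _ = 4 * (((K.divisors.filter (fun d => d % 4 = 1)).card : ℤ)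
            - ((K.divisors.filter (fun d => d % 4 = 3)).card : ℤ)) := by
        rw [Jacobi2Sq.S_filter K]
end

section
/- The number of representations of a positive integer K by the quadratic form x² + xy + y² with (x,y) ∈ ℤ² equals 6(N₁(K) − N₂(K)), where N₁(K) and N₂(K) are the numbers of divisors of K congruent to 1 and 2 modulo 3 respectively. -/
/-- Eisenstein-type integers ℤ[τ] where τ² = τ - 1 (τ a primitive 6th root of unity).
The norm of a + bτ is a² + ab + b². -/
@[ext]
structure Es where
  re : ℤ
  im : ℤ
  deriving DecidableEq

namespace Es

instance : Zero Es := ⟨⟨0, 0⟩⟩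
instance : One Es := ⟨⟨1, 0⟩⟩
instance : Add Es := ⟨fun x y => ⟨x.re + y.re, x.im + y.im⟩⟩
instance : Neg Es := ⟨fun x => ⟨-x.re, -x.im⟩⟩
instance : Mul Es := ⟨fun x y => ⟨x.re * y.re - x.im * y.im, x.re * y.im + x.im * y.re + x.im * y.im⟩⟩

@[simp] theorem zero_re : (0 : Es).re = 0 := rfl
@[simp] theorem zero_im : (0 : Es).im = 0 := rfl
@[simp] theorem one_re : (1 : Es).re = 1 := rfl
@[simp] theorem one_im : (1 : Es).im = 0 := rfl
@[simp] theorem add_re (x y : Es) : (x + y).re = x.re + y.re := rfl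
@[simp] theorem add_im (x y : Es) : (x + y).im = x.im + y.im := rfl
@[simp] theorem neg_re (x : Es) : (-x).re = -x.re := rfl
@[simp] theorem neg_im (x : Es) : (-x).im = -x.im := rfl
@[simp] theorem mul_re (x y : Es) : (x * y).re = x.re * y.re - x.im * y.im := rfl
@[simp] theorem mul_im (x y : Es) : (x * y).im = x.re * y.im + x.im * y.re + x.im * y.im := rfl

instance instCommRing : CommRing Es where
  add_assoc := by intros; ext <;> simp <;> ring
  zero_add := by intros; ext <;> simp
  add_zero := by intros; ext <;> simp
  add_comm := by intros; ext <;> simp <;> ring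
  neg_add_cancel := by intros; ext <;> simp
  mul_assoc := by intros; ext <;> simp <;> ring
  one_mul := by intros; ext <;> simp
  mul_one := by intros; ext <;> simp
  left_distrib := by intros; ext <;> simp <;> ring
  right_distrib := by intros; ext <;> simp <;> ring
  zero_mul := by intros; ext <;> simp
  mul_zero := by intros; ext <;> simp
  mul_comm := by intros; ext <;> simp <;> ring
  nsmul := fun n x => ⟨n * x.re, n * x.im⟩
  nsmul_zero := by intros; ext <;> simp [HSMul.hSMul, SMul.smul]
  nsmul_succ := by intros; ext <;> simp [HSMul.hSMul, SMul.smul] <;> ring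
  zsmul := fun n x => ⟨n * x.re, n * x.im⟩
  zsmul_zero' := by intros; ext <;> simp [HSMul.hSMul, SMul.smul]
  zsmul_succ' := by intros; ext <;> simp [HSMul.hSMul, SMul.smul] <;> ring
  zsmul_neg' := by intros; ext <;> simp [Int.negSucc_eq, HSMul.hSMul, SMul.smul] <;> ring
  natCast := fun n => ⟨n, 0⟩
  natCast_zero := by ext <;> simp
  natCast_succ := by intros; ext <;> simp
  intCast := fun n => ⟨n, 0⟩
  intCast_ofNat := by intros; ext <;> rfl
  intCast_negSucc := fun n => by
    ext
    · show Int.negSucc n = -((n + 1 : ℕ) : ℤ)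
      simp [Int.negSucc_eq]
    · show (0 : ℤ) = -(0 : ℤ)
      simp

@[simp] theorem natCast_re (n : ℕ) : (n : Es).re = n := rfl
@[simp] theorem natCast_im (n : ℕ) : (n : Es).im = 0 := rfl
@[simp] theorem intCast_re (n : ℤ) : (n : Es).re = n := rfl
@[simp] theorem intCast_im (n : ℤ) : (n : Es).im = 0 := rfl
@[simp] theorem sub_re (x y : Es) : (x - y).re = x.re - y.re := by
  rw [sub_eq_add_neg, sub_eq_add_neg]; simp
@[simp] theorem sub_im (x y : Es) : (x - y).im = x.im - y.im := by
  rw [sub_eq_add_neg, sub_eq_add_neg]; simp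

instance : Nontrivial Es := ⟨⟨0, 1, by decide⟩⟩

/-- Conjugation: `conj (a + bτ) = (a + b) - bτ`. -/
def conj (x : Es) : Es := ⟨x.re + x.im, -x.im⟩

@[simp] theorem conj_re (x : Es) : (conj x).re = x.re + x.im := rfl
@[simp] theorem conj_im (x : Es) : (conj x).im = -x.im := rfl

theorem conj_mul (x y : Es) : conj (x * y) = conj x * conj y := by
  ext <;> simp [conj] <;> ring

/-- The norm `a² + ab + b²`. -/
def norm (x : Es) : ℤ := x.re * x.re + x.re * x.im + x.im * x.im

theorem norm_mul (x y : Es) : norm (x * y) = norm x * norm y := by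
  simp [norm]; ring

theorem norm_conj (x : Es) : norm (conj x) = norm x := by simp [norm]; ring

theorem mul_conj (x : Es) : x * conj x = (norm x : Es) := by
  ext <;> simp [norm] <;> ring

theorem norm_nonneg (x : Es) : 0 ≤ norm x := by
  have : 4 * norm x = (2 * x.re + x.im)^2 + 3 * x.im^2 := by simp [norm]; ring
  nlinarith [sq_nonneg (2 * x.re + x.im), sq_nonneg x.im]

theorem norm_eq_zero_iff {x : Es} : norm x = 0 ↔ x = 0 := by
  constructor
  · intro h
    have h4 : (2 * x.re + x.im)^2 + 3 * x.im^2 = 0 := by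
      have : 4 * norm x = (2 * x.re + x.im)^2 + 3 * x.im^2 := by simp [norm]; ring
      omega
    have him : x.im = 0 := by nlinarith [sq_nonneg (2 * x.re + x.im), sq_nonneg x.im]
    have hre : x.re = 0 := by nlinarith [sq_nonneg (2 * x.re + x.im)]
    ext <;> simp [hre, him]
  · rintro rfl; simp [norm]

theorem norm_pos {x : Es} (hx : x ≠ 0) : 0 < norm x :=
  lt_of_le_of_ne (norm_nonneg x) (fun h => hx (norm_eq_zero_iff.mp h.symm))

end Es

namespace Es

noncomputable instance : Div Es :=
  ⟨fun x y =>
    ⟨round ((((x * conj y).re : ℚ)) / ((norm y : ℚ))),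
     round ((((x * conj y).im : ℚ)) / ((norm y : ℚ)))⟩⟩

theorem div_def (x y : Es) : x / y =
    ⟨round ((((x * conj y).re : ℚ)) / ((norm y : ℚ))),
     round ((((x * conj y).im : ℚ)) / ((norm y : ℚ)))⟩ := rfl

noncomputable instance : Mod Es := ⟨fun x y => x - y * (x / y)⟩

theorem mod_def (x y : Es) : x % y = x - y * (x / y) := rfl

theorem norm_mod_lt (x : Es) {y : Es} (hy : y ≠ 0) : norm (x % y) < norm y := by
  have hd : (0 : ℤ) < norm y := norm_pos hy
  have hdq : (0 : ℚ) < (norm y : ℚ) := by exact_mod_cast hd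
  set u : ℤ := (x * conj y).re with hu
  set v : ℤ := (x * conj y).im with hv
  set q1 : ℤ := round ((u : ℚ) / (norm y : ℚ)) with hq1
  set q2 : ℤ := round ((v : ℚ) / (norm y : ℚ)) with hq2
  have hxy : x % y = x - y * ⟨q1, q2⟩ := by rw [mod_def, div_def]
  -- key algebraic identity: (x % y) * conj y = ⟨u - norm y * q1, v - norm y * q2⟩
  have key : (x % y) * conj y = ⟨u - norm y * q1, v - norm y * q2⟩ := by
    rw [hxy, sub_mul, mul_comm y, mul_assoc, mul_conj]
    ext <;> simp [hu, hv, norm] <;> ring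
  have hnorm : norm (x % y) * norm y = (u - norm y * q1)^2 + (u - norm y * q1) * (v - norm y * q2) + (v - norm y * q2)^2 := by
    have := norm_mul (x % y) (conj y)
    rw [key, norm_conj] at this
    rw [← this]; simp [norm]; ring
  -- pass to ℚ
  set a : ℚ := (u : ℚ) / (norm y : ℚ) - q1 with ha
  set b : ℚ := (v : ℚ) / (norm y : ℚ) - q2 with hb
  have hua : ((u - norm y * q1 : ℤ) : ℚ) = (norm y : ℚ) * a := by
    rw [ha]; push_cast; field_simp [ne_of_gt hdq]
  have hvb : ((v - norm y * q2 : ℤ) : ℚ) = (norm y : ℚ) * b := by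
    rw [hb]; push_cast; field_simp [ne_of_gt hdq]
  have habs_a : |a| ≤ 1/2 := by rw [ha, hq1]; exact abs_sub_round _
  have habs_b : |b| ≤ 1/2 := by rw [hb, hq2]; exact abs_sub_round _
  have hform : a^2 + a*b + b^2 ≤ 3/4 := by
    obtain ⟨ha1, ha2⟩ := abs_le.mp habs_a
    obtain ⟨hb1, hb2⟩ := abs_le.mp habs_b
    nlinarith [sq_nonneg (a+b), sq_nonneg (a-b)]
  have hQ : (norm (x % y) : ℚ) * (norm y : ℚ) = (norm y : ℚ)^2 * (a^2 + a*b + b^2) := by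
    have := congrArg (fun t : ℤ => (t : ℚ)) hnorm
    push_cast at this
    rw [show ((u : ℚ) - (norm y : ℚ) * q1) = (norm y : ℚ) * a by push_cast at hua; linarith [hua],
        show ((v : ℚ) - (norm y : ℚ) * q2) = (norm y : ℚ) * b by push_cast at hvb; linarith [hvb]] at this
    rw [this]; ring
  have hlt : (norm (x % y) : ℚ) < (norm y : ℚ) := by
    have h1 : (norm (x % y) : ℚ) = (norm y : ℚ) * (a^2 + a*b + b^2) := by
      have hne : (norm y : ℚ) ≠ 0 := ne_of_gt hdq
      field_simp at hQ ⊢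
      nlinarith [hQ]
    rw [h1]
    calc (norm y : ℚ) * (a^2 + a*b + b^2) ≤ (norm y : ℚ) * (3/4) :=
          mul_le_mul_of_nonneg_left hform hdq.le
      _ < (norm y : ℚ) := by linarith
  exact_mod_cast hlt

theorem natAbs_norm_mod_lt (x : Es) {y : Es} (hy : y ≠ 0) :
    (norm (x % y)).natAbs < (norm y).natAbs := by
  have := norm_mod_lt x hy
  have h1 := norm_nonneg (x % y)
  have h2 := norm_nonneg y
  omega

theorem norm_le_norm_mul_left (x : Es) {y : Es} (hy : y ≠ 0) :
    (norm x).natAbs ≤ (norm (x * y)).natAbs := by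
  rw [norm_mul, Int.natAbs_mul]
  have := norm_pos hy
  have h1 := norm_nonneg x
  nlinarith [Int.natAbs_of_nonneg h1, Int.natAbs_of_nonneg (le_of_lt this), Nat.le_mul_of_pos_right (norm x).natAbs (show 0 < (norm y).natAbs by omega)]

noncomputable instance : EuclideanDomain Es :=
  { Es.instCommRing, (inferInstance : Nontrivial Es) with
    quotient := (· / ·)
    remainder := (· % ·)
    quotient_zero := fun x => by
      ext <;> simp [div_def, norm] <;> norm_num
    quotient_mul_add_remainder_eq := fun x y => by
      show y * (x / y) + (x - y * (x / y)) = x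
      ring
    r := fun a b => (norm a).natAbs < (norm b).natAbs
    r_wellFounded := (measure (Int.natAbs ∘ norm)).wf
    remainder_lt := fun a b hb => natAbs_norm_mod_lt a hb
    mul_left_not_lt := fun a b hb0 => not_lt_of_ge <| norm_le_norm_mul_left a hb0 }

end Es

namespace Es

@[simp] theorem conj_conj (x : Es) : conj (conj x) = x := by ext <;> simp [conj]

theorem conj_add (x y : Es) : conj (x + y) = conj x + conj y := by ext <;> simp [conj] <;> ring

theorem conj_dvd_conj {x y : Es} (h : x ∣ y) : conj x ∣ conj y := by
  obtain ⟨c, rfl⟩ := h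
  exact ⟨conj c, conj_mul _ _⟩

theorem conj_dvd_iff {x y : Es} : conj x ∣ conj y ↔ x ∣ y :=
  ⟨fun h => by simpa using conj_dvd_conj h, conj_dvd_conj⟩

theorem intCast_mul_eq (n : ℤ) (w : Es) : (n : Es) * w = ⟨n * w.re, n * w.im⟩ := by
  ext <;> simp

theorem intCast_dvd_iff (n : ℤ) (z : Es) : (n : Es) ∣ z ↔ n ∣ z.re ∧ n ∣ z.im := by
  constructor
  · rintro ⟨c, rfl⟩
    rw [intCast_mul_eq]
    exact ⟨⟨c.re, rfl⟩, ⟨c.im, rfl⟩⟩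
  · rintro ⟨⟨a, ha⟩, ⟨b, hb⟩⟩
    exact ⟨⟨a, b⟩, by rw [intCast_mul_eq]; ext <;> simp [ha, hb]⟩

theorem norm_natCast (n : ℕ) : norm (n : Es) = (n : ℤ) * (n : ℤ) := by simp [norm]

theorem isUnit_iff_norm {z : Es} : IsUnit z ↔ norm z = 1 := by
  constructor
  · rintro ⟨u, rfl⟩
    have h1 : norm (u : Es) * norm ((u⁻¹ : Esˣ) : Es) = 1 := by
      rw [← norm_mul]
      simp [norm]
    exact Int.eq_one_of_mul_eq_one_right (norm_nonneg _) h1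
  · intro h
    apply IsUnit.of_mul_eq_one (conj z)
    rw [mul_conj, h]
    rfl

/-- All six units. -/
theorem eq_of_norm_eq_one {z : Es} (h : norm z = 1) :
    z = ⟨1,0⟩ ∨ z = ⟨-1,0⟩ ∨ z = ⟨0,1⟩ ∨ z = ⟨0,-1⟩ ∨ z = ⟨1,-1⟩ ∨ z = ⟨-1,1⟩ := by
  obtain ⟨a, b⟩ := z
  simp only [norm] at h
  have hb : -1 ≤ b ∧ b ≤ 1 := by constructor <;> nlinarith [sq_nonneg (2*a+b), sq_nonneg b, sq_nonneg (a+b), sq_nonneg a]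
  obtain ⟨hb1, hb2⟩ := hb
  interval_cases b
  · -- b = -1 : a*a - a + 1 = 1, a(a-1) = 0
    have : a * (a - 1) = 0 := by nlinarith
    rcases mul_eq_zero.mp this with h | h
    · subst h; right; right; right; left; rfl
    · have : a = 1 := by omega
      subst this; right; right; right; right; left; rfl
  · -- b = 0 : a*a = 1
    have : (a - 1) * (a + 1) = 0 := by nlinarith
    rcases mul_eq_zero.mp this with h | h
    · have : a = 1 := by omega
      subst this; left; rfl
    · have : a = -1 := by omega
      subst this; right; left; rfl
  · -- b = 1 : a*a + a + 1 = 1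
    have : a * (a + 1) = 0 := by nlinarith
    rcases mul_eq_zero.mp this with h | h
    · subst h; right; right; left; rfl
    · have : a = -1 := by omega
      subst this; right; right; right; right; right; rfl

theorem sq_mod_three (t : ℤ) : t * t % 3 = 0 ∨ t * t % 3 = 1 := by
  have h : t % 3 = 0 ∨ t % 3 = 1 ∨ t % 3 = 2 := by omega
  rw [Int.mul_emod]
  rcases h with h | h | h <;> rw [h] <;> decide

/-- No element has norm `≡ 2 (mod 3)`. -/
theorem no_norm_two_mod_three {z : Es} {n : ℤ} (hn : n % 3 = 2) : norm z ≠ n := by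
  intro h
  have h4 : (2 * z.re + z.im) * (2 * z.re + z.im) + 3 * (z.im * z.im) = 4 * n := by
    simp only [norm] at h; nlinarith [h]
  have := sq_mod_three (2 * z.re + z.im)
  generalize hs : (2 * z.re + z.im) * (2 * z.re + z.im) = s at *
  generalize hbb : z.im * z.im = c at *
  omega

/-- An element whose norm is a rational prime is prime. -/
theorem prime_of_norm_prime {π : Es} {p : ℕ} (hp : p.Prime) (h : norm π = (p : ℤ)) :
    Prime π := by
  rw [← UniqueFactorizationMonoid.irreducible_iff_prime]
  constructor
  · rw [isUnit_iff_norm, h]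
    exact_mod_cast hp.ne_one ∘ fun hh => by exact_mod_cast hh
  · intro u v huv
    have hnorm : norm u * norm v = (p : ℤ) := by rw [← norm_mul, ← huv, h]
    have hirr := (Nat.prime_iff_prime_int.mp hp).irreducible
    rcases hirr.isUnit_or_isUnit hnorm.symm with hu | hv
    · left
      rw [isUnit_iff_norm]
      rcases Int.isUnit_iff.mp hu with h1 | h1
      · exact h1
      · have := norm_nonneg u; omega
    · right
      rw [isUnit_iff_norm]
      rcases Int.isUnit_iff.mp hv with h1 | h1
      · exact h1
      · have := norm_nonneg v; omega

end Es

namespace Es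

/-- Helper: if `a * b = p²` with `a, b ≥ 0` both not `1`, then `a = p`. -/
theorem eq_p_of_mul_eq_p_sq {a b p : ℤ} (hp : Prime p) (hpos : 0 < p)
    (h : a * b = p * p) (ha0 : 0 ≤ a) (ha : a ≠ 1) (hb : b ≠ 1) : a = p := by
  have hb0 : 0 < b := by
    rcases lt_trichotomy b 0 with h1 | h1 | h1
    · nlinarith
    · rw [h1, mul_zero] at h; nlinarith
    · exact h1
  have ha0' : 0 < a := by
    rcases eq_or_lt_of_le ha0 with h1 | h1
    · rw [← h1, zero_mul] at h; nlinarith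
    · exact h1
  rcases hp.dvd_mul.mp ⟨p, h⟩ with hdvd | hdvd
  · obtain ⟨c, rfl⟩ := hdvd
    have hc : c * b = p := mul_left_cancel₀ (ne_of_gt hpos) (by rw [← h]; ring)
    rcases (hp.irreducible.isUnit_or_isUnit hc.symm) with hu | hu
    · rcases Int.isUnit_iff.mp hu with h1 | h1
      · rw [h1, mul_one]
      · rw [h1] at ha0'; nlinarith
    · rcases Int.isUnit_iff.mp hu with h1 | h1
      · exact absurd h1 hb
      · rw [h1] at hb0; omega
  · obtain ⟨c, rfl⟩ := hdvd
    have hc : a * c = p := mul_left_cancel₀ (ne_of_gt hpos) (by rw [← h]; ring)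
    rcases (hp.irreducible.isUnit_or_isUnit hc.symm) with hu | hu
    · rcases Int.isUnit_iff.mp hu with h1 | h1
      · exact absurd h1 ha
      · rw [h1] at ha0'; omega
    · rcases Int.isUnit_iff.mp hu with h1 | h1
      · rw [h1, mul_one] at hc; exact hc
      · rw [h1] at hc; nlinarith

/-- A rational prime `p ≡ 2 (mod 3)` is prime in `Es`. -/
theorem prime_intCast_of_two_mod_three {p : ℕ} (hp : p.Prime) (h3 : p % 3 = 2) :
    Prime ((p : ℤ) : Es) := by
  rw [← UniqueFactorizationMonoid.irreducible_iff_prime]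
  have hp2 : (2 : ℕ) ≤ p := hp.two_le
  constructor
  · rw [isUnit_iff_norm, norm]
    simp only [intCast_re, intCast_im]
    intro hh
    have : (p : ℤ) * p ≤ 1 := by nlinarith [hh]
    nlinarith [this, (show (2:ℤ) ≤ p by exact_mod_cast hp2)]
  · intro u v huv
    by_contra hcon
    push_neg at hcon
    obtain ⟨hu, hv⟩ := hcon
    have hnu : norm u ≠ 1 := fun hh => hu (isUnit_iff_norm.mpr hh)
    have hnv : norm v ≠ 1 := fun hh => hv (isUnit_iff_norm.mpr hh)
    have hnorm : norm u * norm v = (p : ℤ) * (p : ℤ) := by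
      rw [← norm_mul, ← huv, norm]
      simp only [intCast_re, intCast_im]
      ring
    have hppr : Prime ((p : ℕ) : ℤ) := Nat.prime_iff_prime_int.mp hp
    have hppos : (0 : ℤ) < p := by exact_mod_cast hp.pos
    have := eq_p_of_mul_eq_p_sq hppr hppos hnorm (norm_nonneg u) hnu hnv
    exact no_norm_two_mod_three (by omega : (p : ℤ) % 3 = 2) this

/-- For `p ≡ 1 (mod 3)`, there is `c` with `p ∣ c² + c + 1`. -/
theorem exists_cube_root {p : ℕ} (hp : p.Prime) (h3 : p % 3 = 1) :
    ∃ c : ℤ, (p : ℤ) ∣ c * c + c + 1 := by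
  haveI : Fact p.Prime := ⟨hp⟩
  have hcard : Fintype.card (ZMod p)ˣ = p - 1 := by
    rw [ZMod.card_units_eq_totient, Nat.totient_prime hp]
  have hdvd : 3 ∣ Fintype.card (ZMod p)ˣ := by
    rw [hcard]; omega
  obtain ⟨x, hx⟩ := exists_prime_orderOf_dvd_card 3 hdvd
  set c' : ZMod p := (x : ZMod p) with hc'
  have hx3 : x ^ 3 = 1 := by rw [← hx]; exact pow_orderOf_eq_one x
  have hc3 : c' ^ 3 = 1 := by
    rw [hc', ← Units.val_pow_eq_pow_val, hx3, Units.val_one]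
  have hc1 : c' ≠ 1 := by
    intro hh
    have : x = 1 := Units.ext (by rw [Units.val_one, ← hh])
    rw [this, orderOf_one] at hx
    omega
  have hfac : (c' - 1) * (c' * c' + c' + 1) = 0 := by
    have h1 : c' * c' * c' = 1 := by rw [← hc3]; ring
    linear_combination h1
  have hquad : c' * c' + c' + 1 = 0 := by
    rcases mul_eq_zero.mp hfac with h | h
    · exact absurd (by linear_combination h : c' = 1) hc1
    · exact h
  refine ⟨(c'.val : ℤ), ?_⟩
  rw [← ZMod.intCast_zmod_eq_zero_iff_dvd]
  push_cast
  rw [ZMod.natCast_val, ZMod.cast_id]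
  exact_mod_cast hquad

/-- A rational prime `p ≡ 1 (mod 3)` has an element of norm `p`. -/
theorem exists_norm_eq_of_one_mod_three {p : ℕ} (hp : p.Prime) (h3 : p % 3 = 1) :
    ∃ π : Es, norm π = (p : ℤ) := by
  obtain ⟨c, hc⟩ := exists_cube_root hp h3
  -- (p : Es) is not prime
  have hnotprime : ¬Prime ((p : ℤ) : Es) := by
    intro hpr
    have hdvd : ((p : ℤ) : Es) ∣ (⟨c, 1⟩ : Es) * conj ⟨c, 1⟩ := by
      rw [mul_conj]
      have : norm (⟨c, 1⟩ : Es) = c * c + c + 1 := by simp [norm]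
      rw [this]
      obtain ⟨k, hk⟩ := hc
      rw [hk]
      push_cast
      exact ⟨(k : Es), by push_cast; ring⟩
    have hp2 : (2 : ℤ) ≤ p := by exact_mod_cast hp.two_le
    rcases hpr.dvd_mul.mp hdvd with h | h
    · rw [intCast_dvd_iff] at h
      have h2 : (p : ℤ) ∣ 1 := h.2
      rcases Int.isUnit_iff.mp (isUnit_of_dvd_one h2) with h1 | h1 <;> omega
    · rw [intCast_dvd_iff] at h
      have h2 : (p : ℤ) ∣ -1 := h.2
      have h2' : (p : ℤ) ∣ 1 := dvd_neg.mp h2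
      rcases Int.isUnit_iff.mp (isUnit_of_dvd_one h2') with h1 | h1 <;> omega
  have hnz : ((p : ℤ) : Es) ≠ 0 := by
    intro hh
    have := congrArg Es.re hh
    simp at this
    exact hp.ne_zero (by exact_mod_cast this)
  have hnu : ¬IsUnit ((p : ℤ) : Es) := by
    rw [isUnit_iff_norm, norm]
    simp only [intCast_re, intCast_im]
    have hp2 : (2 : ℤ) ≤ p := by exact_mod_cast hp.two_le
    intro hh; nlinarith [hh]
  have hnotirr : ¬Irreducible ((p : ℤ) : Es) := by
    intro hirr
    exact hnotprime (UniqueFactorizationMonoid.irreducible_iff_prime.mp hirr)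
  rw [irreducible_iff] at hnotirr
  push_neg at hnotirr
  have h2 := hnotirr hnu
  obtain ⟨u, v, huv, hu, hv⟩ := h2
  have hnu1 : norm u ≠ 1 := fun hh => hu (isUnit_iff_norm.mpr hh)
  have hnv1 : norm v ≠ 1 := fun hh => hv (isUnit_iff_norm.mpr hh)
  have hnorm : norm u * norm v = (p : ℤ) * (p : ℤ) := by
    rw [← norm_mul, ← huv, norm]
    simp only [intCast_re, intCast_im]
    ring
  have hppr : Prime ((p : ℕ) : ℤ) := Nat.prime_iff_prime_int.mp hp
  have hppos : (0 : ℤ) < p := by exact_mod_cast hp.pos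
  exact ⟨u, eq_p_of_mul_eq_p_sq hppr hppos hnorm (norm_nonneg u) hnu1 hnv1⟩

end Es

namespace Es

/-- For a split prime, `π` does not divide its conjugate. -/
theorem not_dvd_conj_self {π : Es} {p : ℕ} (hp : p.Prime) (h3 : p % 3 = 1)
    (hnorm : norm π = (p : ℤ)) : ¬ π ∣ conj π := by
  intro hdvd
  set a := π.re with ha
  set b := π.im with hb
  -- π divides the integer 2a + b
  have htr : π + conj π = ((2 * a + b : ℤ) : Es) := by
    have hcast : ((2 * a + b : ℤ) : Es) = ⟨2 * a + b, 0⟩ := rfl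
    rw [hcast]; ext <;> simp [conj] <;> ring
  have hdvd1 : π ∣ ((2 * a + b : ℤ) : Es) := by
    rw [← htr]; exact Dvd.dvd.add dvd_rfl hdvd
  have hdvd2 : π ∣ ((p : ℤ) : Es) := by
    refine ⟨conj π, ?_⟩
    rw [mul_conj, hnorm]
  -- p does not divide 2a + b in ℤ
  have hkey : ¬ (p : ℤ) ∣ (2 * a + b) := by
    intro hd
    have h4p : (2 * a + b) * (2 * a + b) + 3 * (b * b) = 4 * (p : ℤ) := by
      simp only [norm] at hnorm
      nlinarith [hnorm]
    have hp2 : (2 : ℤ) ≤ p := by exact_mod_cast hp.two_le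
    rcases eq_or_ne (2 * a + b) 0 with hz | hz
    · -- 3b² = 4p, so 3 ∣ p, p = 3, contradiction with p % 3 = 1
      rw [hz] at h4p
      simp at h4p
      have h3p : (3 : ℤ) ∣ 4 * (p : ℤ) := ⟨b * b, by linarith⟩
      have : (3 : ℤ) ∣ (p : ℤ) := by omega
      have : (3 : ℕ) ∣ p := by exact_mod_cast this
      omega
    · obtain ⟨k, hk⟩ := hd
      have h4p' : ((p : ℤ) * k) * ((p : ℤ) * k) + 3 * (b * b) = 4 * (p : ℤ) := by
        rw [← hk]; exact h4p
      have hk2 : (p : ℤ) * (p : ℤ) * (k * k) ≤ 4 * p := by nlinarith [h4p', sq_nonneg b]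
      have hkne : k ≠ 0 := by
        intro h0; rw [h0, mul_zero] at hk; exact hz hk
      have hk1 : 1 ≤ k * k := by
        have h1 : 1 ≤ |k| := Int.one_le_abs hkne
        nlinarith [h1, abs_mul_abs_self k]
      have hple : (p : ℤ) ≤ 4 := by nlinarith [hk2, hk1, hp2]
      have hple' : p ≤ 4 := by exact_mod_cast hple
      have h2le := hp.two_le
      interval_cases p
      · omega
      · omega
      · norm_num at hp
  -- coprimality in ℤ gives π ∣ 1
  have hppr : Prime ((p : ℕ) : ℤ) := Nat.prime_iff_prime_int.mp hp
  have hcop : IsCoprime ((p : ℕ) : ℤ) (2 * a + b) := hppr.coprime_iff_not_dvd.mpr hkey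
  obtain ⟨s, t, hst⟩ := hcop
  have hone : π ∣ (1 : Es) := by
    have h1 : ((s * p + t * (2 * a + b) : ℤ) : Es) = 1 := by rw [hst]; rfl
    rw [← h1]
    have e1 : ((s * p + t * (2 * a + b) : ℤ) : Es)
        = ((s : ℤ) : Es) * (((p : ℕ) : ℤ) : Es) + ((t : ℤ) : Es) * ((2 * a + b : ℤ) : Es) := by
      push_cast; ring
    rw [e1]
    exact dvd_add (hdvd2.mul_left _) (hdvd1.mul_left _)
  have := isUnit_of_dvd_one hone
  rw [isUnit_iff_norm, hnorm] at this
  have hp2 : (2 : ℤ) ≤ p := by exact_mod_cast hp.two_le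
  omega

/-- λ = 1 + τ has norm 3. -/
theorem norm_lam : norm (⟨1, 1⟩ : Es) = 3 := by simp [norm]

theorem prime_lam : Prime (⟨1, 1⟩ : Es) :=
  prime_of_norm_prime (p := 3) (by norm_num) (by rw [norm_lam]; norm_num)

/-- If `3 ∣ norm z`, then λ ∣ z. -/
theorem lam_dvd_of_three_dvd {z : Es} (h : (3 : ℤ) ∣ norm z) : (⟨1, 1⟩ : Es) ∣ z := by
  have hdvd : (⟨1, 1⟩ : Es) ∣ z * conj z := by
    rw [mul_conj]
    obtain ⟨k, hk⟩ := h
    rw [hk]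
    push_cast
    have h3 : ((3 : ℤ) : Es) = (⟨1, 1⟩ : Es) * conj ⟨1, 1⟩ := by rw [mul_conj, norm_lam]
    have : (⟨1, 1⟩ : Es) ∣ ((3 : ℤ) : Es) := ⟨conj ⟨1, 1⟩, h3⟩
    push_cast at this
    exact this.mul_right _
  rcases prime_lam.dvd_mul.mp hdvd with h1 | h1
  · exact h1
  · have h2 : conj (⟨1, 1⟩ : Es) ∣ z := by simpa using conj_dvd_conj h1
    have h3 : conj (⟨1, 1⟩ : Es) = (⟨1, 1⟩ : Es) * ⟨1, -1⟩ := by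
      ext <;> simp [conj]
    exact dvd_trans ⟨⟨1, -1⟩, h3⟩ h2

/-- Uniqueness of prime power decomposition. -/
theorem pow_mul_eq_pow_mul {α : Type*} [CommMonoidWithZero α] [IsCancelMulZero α] {x : α} (hx : Prime x)
    {n m : ℕ} {u w : α}
    (hu : ¬ x ∣ u) (hw : ¬ x ∣ w) (h : x ^ n * u = x ^ m * w) : n = m ∧ u = w := by
  have hx0 : x ≠ 0 := hx.ne_zero
  have key : ∀ a b : ℕ, ∀ s t : α, ¬ x ∣ s → ¬ x ∣ t → x ^ a * s = x ^ b * t → a ≤ b → a = b := by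
    intro a b s t hs ht heq hab
    by_contra hne
    have hlt : a < b := lt_of_le_of_ne hab hne
    have : x ^ a * s = x ^ a * (x ^ (b - a) * t) := by
      rw [heq, ← mul_assoc, ← pow_add]
      congr 2
      omega
    have hst : s = x ^ (b - a) * t := mul_left_cancel₀ (pow_ne_zero a hx0) this
    have : x ∣ s := by
      rw [hst]
      exact Dvd.dvd.mul_right (dvd_pow_self x (by omega : b - a ≠ 0)) t
    exact hs this
  have hnm : n = m := by
    rcases le_total n m with hle | hle
    · exact key n m u w hu hw h hle
    · exact (key m n w u hw hu h.symm hle).symm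
  subst hnm
  exact ⟨rfl, mul_left_cancel₀ (pow_ne_zero n hx0) h⟩

end Es

namespace Es

/-- Solutions of `norm z = K`. -/
def sols (K : ℕ) : Set Es := {z | norm z = (K : ℤ)}

theorem sols_finite (K : ℕ) : (sols K).Finite := by
  have hsub : sols K ⊆ (fun z : Es => (z.re, z.im)) ⁻¹'
      (Set.Icc (-(K : ℤ) - 1) ((K : ℤ) + 1) ×ˢ Set.Icc (-(K : ℤ) - 1) ((K : ℤ) + 1)) := by
    intro z hz
    have hn : z.re * z.re + z.re * z.im + z.im * z.im = (K : ℤ) := hz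
    have hK0 : (0 : ℤ) ≤ K := Int.natCast_nonneg K
    have h4 : (2 * z.re + z.im) * (2 * z.re + z.im) + 3 * (z.im * z.im) = 4 * (K : ℤ) := by
      nlinarith [hn]
    constructor
    · constructor
      · nlinarith [h4, sq_nonneg (2 * z.re + z.im), sq_nonneg (z.im + (K:ℤ) + 1), sq_nonneg (z.im - (K:ℤ) - 1), sq_nonneg ((K:ℤ) - 1), sq_nonneg (z.re + (K:ℤ) + 1), sq_nonneg (z.re - (K:ℤ) - 1)]
      · nlinarith [h4, sq_nonneg (2 * z.re + z.im), sq_nonneg (z.im + (K:ℤ) + 1), sq_nonneg (z.im - (K:ℤ) - 1), sq_nonneg ((K:ℤ) - 1), sq_nonneg (z.re + (K:ℤ) + 1), sq_nonneg (z.re - (K:ℤ) - 1)]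
    · constructor
      · nlinarith [h4, sq_nonneg (2 * z.re + z.im), sq_nonneg (z.im + (K:ℤ) + 1), sq_nonneg (z.im - (K:ℤ) - 1), sq_nonneg ((K:ℤ) - 1)]
      · nlinarith [h4, sq_nonneg (2 * z.re + z.im), sq_nonneg (z.im + (K:ℤ) + 1), sq_nonneg (z.im - (K:ℤ) - 1), sq_nonneg ((K:ℤ) - 1)]
  have hfin : (Set.Icc (-(K : ℤ) - 1) ((K : ℤ) + 1) ×ˢ Set.Icc (-(K : ℤ) - 1) ((K : ℤ) + 1)).Finite :=
    (Set.finite_Icc _ _).prod (Set.finite_Icc _ _)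
  have hinj : Function.Injective (fun z : Es => (z.re, z.im)) := by
    intro x y h
    ext
    · exact congrArg Prod.fst h
    · exact congrArg Prod.snd h
  exact Set.Finite.subset (Set.Finite.preimage hinj.injOn hfin) hsub

/-- Multiplication bijection: if every solution of norm `n*m` is divisible by `g` with
`norm g = n`, then the solution counts agree. -/
theorem ncard_sols_eq_of_dvd {g : Es} {n m : ℕ} (hn : 0 < n) (hg : norm g = (n : ℤ))
    (hsur : ∀ z ∈ sols (n * m), g ∣ z) : (sols (n * m)).ncard = (sols m).ncard := by
  have hgne : g ≠ 0 := by
    intro hh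
    rw [hh] at hg
    simp [norm] at hg
    omega
  have himg : sols (n * m) = (fun w => g * w) '' sols m := by
    ext z
    constructor
    · intro hz
      obtain ⟨w, rfl⟩ := hsur z hz
      refine ⟨w, ?_, rfl⟩
      have h1 : norm g * norm w = (n : ℤ) * (m : ℤ) := by
        rw [← norm_mul]
        have := hz
        simp only [sols, Set.mem_setOf_eq] at this
        rw [this]
        push_cast
        ring
      rw [hg] at h1
      have : norm w = (m : ℤ) := by
        have hn0 : (n : ℤ) ≠ 0 := by exact_mod_cast hn.ne'
        exact mul_left_cancel₀ hn0 h1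
      exact this
    · rintro ⟨w, hw, rfl⟩
      simp only [sols, Set.mem_setOf_eq] at hw ⊢
      rw [norm_mul, hg, hw]
      push_cast
      ring
  rw [himg, Set.ncard_image_of_injective _ (mul_right_injective₀ hgne)]

/-- Case `3 ∣ K`: dividing by λ. -/
theorem ncard_sols_three (m : ℕ) : (sols (3 * m)).ncard = (sols m).ncard := by
  apply ncard_sols_eq_of_dvd (by norm_num) (by rw [norm_lam]; norm_num)
  intro z hz
  apply lam_dvd_of_three_dvd
  simp only [sols, Set.mem_setOf_eq] at hz
  rw [hz]
  exact ⟨m, by push_cast; ring⟩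

/-- Norm of integer powers. -/
theorem norm_intCast_pow (p : ℕ) (j : ℕ) : norm (((p : ℤ) : Es) ^ j) = (p : ℤ) ^ (2 * j) := by
  induction j with
  | zero => simp [norm]
  | succ i ih =>
      rw [pow_succ, norm_mul, ih]
      have h : norm ((p : ℤ) : Es) = (p : ℤ) * (p : ℤ) := by simp [norm]
      rw [h]
      ring

/-- Inert prime, even exponent. -/
theorem ncard_sols_inert_even {p : ℕ} (hp : p.Prime) (h3 : p % 3 = 2) (k m : ℕ)
    (hm : ¬ p ∣ m) : (sols (p ^ (2 * k) * m)).ncard = (sols m).ncard := by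
  have hprime : Prime ((p : ℤ) : Es) := prime_intCast_of_two_mod_three hp h3
  have hnormp : norm (((p : ℤ) : Es) ^ k) = ((p ^ (2*k) : ℕ) : ℤ) := by
    rw [norm_intCast_pow]
    push_cast
    ring
  apply ncard_sols_eq_of_dvd (Nat.pow_pos hp.pos) hnormp
  intro z hz
  simp only [sols, Set.mem_setOf_eq] at hz
  -- z ≠ 0 when k and m positive; if m = 0 handled by hm? m ≠ 0 since ¬p∣m implies m≠0... p∣0 always
  have hm0 : m ≠ 0 := fun h => hm (h ▸ dvd_zero p)
  have hz0 : z ≠ 0 := by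
    intro hh
    rw [hh] at hz
    have h0 : (0 : ℤ) = ((p ^ (2*k) * m : ℕ) : ℤ) := by simpa [norm] using hz
    have hcon : p ^ (2*k) * m = 0 := by exact_mod_cast h0.symm
    exact (Nat.mul_ne_zero (pow_ne_zero _ hp.ne_zero) hm0) hcon
  obtain ⟨j, w, hw, rfl⟩ := WfDvdMonoid.max_power_factor hz0 hprime.irreducible
  have hnw : ¬ (p : ℤ) ∣ norm w := by
    intro hd
    have hdd : ((p : ℤ) : Es) ∣ w * conj w := by
      rw [mul_conj]
      obtain ⟨t, ht⟩ := hd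
      rw [ht]
      push_cast
      exact Dvd.dvd.mul_right (dvd_refl _) _
    rcases hprime.dvd_mul.mp hdd with h | h
    · exact hw h
    · have h2 : conj ((p : ℤ) : Es) ∣ w := by simpa using conj_dvd_conj h
      have h3 : conj ((p : ℤ) : Es) = ((p : ℤ) : Es) := by ext <;> simp [conj]
      rw [h3] at h2
      exact hw h2
  -- norm equation
  have heq : ((p : ℤ)) ^ (2 * j) * norm w = ((p : ℤ)) ^ (2 * k) * (m : ℤ) := by
    have h1 : norm (((p : ℤ) : Es) ^ j * w) = ((p ^ (2*k) * m : ℕ) : ℤ) := hz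
    rw [norm_mul, norm_intCast_pow] at h1
    rw [h1]
    push_cast
    ring
  have hpZ : Prime (p : ℤ) := Nat.prime_iff_prime_int.mp hp
  have hmZ : ¬ (p : ℤ) ∣ (m : ℤ) := fun hd => hm (by exact_mod_cast hd)
  obtain ⟨hjk, -⟩ := pow_mul_eq_pow_mul hpZ hnw hmZ heq
  have hjk' : j = k := by omega
  rw [hjk']
  exact Dvd.dvd.mul_right dvd_rfl w

/-- Inert prime, odd exponent: no solutions. -/
theorem sols_inert_odd {p : ℕ} (hp : p.Prime) (h3 : p % 3 = 2) (k m : ℕ)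
    (hm : ¬ p ∣ m) : sols (p ^ (2 * k + 1) * m) = ∅ := by
  have hprime : Prime ((p : ℤ) : Es) := prime_intCast_of_two_mod_three hp h3
  ext z
  simp only [sols, Set.mem_setOf_eq, Set.mem_empty_iff_false, iff_false]
  intro hz
  have hm0 : m ≠ 0 := fun h => hm (h ▸ dvd_zero p)
  have hz0 : z ≠ 0 := by
    intro hh
    rw [hh] at hz
    have h0 : (0 : ℤ) = ((p ^ (2*k+1) * m : ℕ) : ℤ) := by simpa [norm] using hz
    have hcon : p ^ (2*k+1) * m = 0 := by exact_mod_cast h0.symm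
    exact (Nat.mul_ne_zero (pow_ne_zero _ hp.ne_zero) hm0) hcon
  obtain ⟨j, w, hw, rfl⟩ := WfDvdMonoid.max_power_factor hz0 hprime.irreducible
  have hnw : ¬ (p : ℤ) ∣ norm w := by
    intro hd
    have hdd : ((p : ℤ) : Es) ∣ w * conj w := by
      rw [mul_conj]
      obtain ⟨t, ht⟩ := hd
      rw [ht]
      push_cast
      exact Dvd.dvd.mul_right (dvd_refl _) _
    rcases hprime.dvd_mul.mp hdd with h | h
    · exact hw h
    · have h2 : conj ((p : ℤ) : Es) ∣ w := by simpa using conj_dvd_conj h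
      have h3 : conj ((p : ℤ) : Es) = ((p : ℤ) : Es) := by ext <;> simp [conj]
      rw [h3] at h2
      exact hw h2
  have heq : ((p : ℤ)) ^ (2 * j) * norm w = ((p : ℤ)) ^ (2 * k + 1) * (m : ℤ) := by
    have h1 : norm (((p : ℤ) : Es) ^ j * w) = ((p ^ (2*k+1) * m : ℕ) : ℤ) := hz
    rw [norm_mul, norm_intCast_pow] at h1
    rw [h1]
    push_cast
    ring
  have hpZ : Prime (p : ℤ) := Nat.prime_iff_prime_int.mp hp
  have hmZ : ¬ (p : ℤ) ∣ (m : ℤ) := fun hd => hm (by exact_mod_cast hd)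
  obtain ⟨hjk, -⟩ := pow_mul_eq_pow_mul hpZ hnw hmZ heq
  omega

end Es

namespace Es

theorem norm_pow (x : Es) (n : ℕ) : norm (x ^ n) = (norm x) ^ n := by
  induction n with
  | zero => simp [norm]
  | succ i ih => rw [pow_succ, norm_mul, ih, pow_succ]

/-- Split prime counting. -/
theorem ncard_sols_split {π : Es} {p : ℕ} (hp : p.Prime) (h3 : p % 3 = 1)
    (hπ : norm π = (p : ℤ)) (e m : ℕ) (hm : ¬ p ∣ m) :
    (sols (p ^ e * m)).ncard = (e + 1) * (sols m).ncard := by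
  have hπpr : Prime π := prime_of_norm_prime hp hπ
  have hπc : norm (conj π) = (p : ℤ) := by rw [norm_conj, hπ]
  have hπcpr : Prime (conj π) := prime_of_norm_prime hp hπc
  have hnd : ¬ π ∣ conj π := not_dvd_conj_self hp h3 hπ
  have hndc : ¬ conj π ∣ π := by
    intro h
    have := conj_dvd_conj h
    rw [conj_conj] at this
    -- conj π ∣ π gives conj(conj π) ∣ conj π i.e. π ∣ conj π
    exact hnd this
  have hpZ : Prime (p : ℤ) := Nat.prime_iff_prime_int.mp hp
  have hmZ : ¬ (p : ℤ) ∣ (m : ℤ) := fun hd => hm (by exact_mod_cast hd)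
  have hm0 : m ≠ 0 := fun h => hm (h ▸ dvd_zero p)
  -- non-divisibility of solutions of norm m
  have hkey : ∀ w : Es, norm w = (m : ℤ) → ¬ π ∣ w ∧ ¬ conj π ∣ w := by
    intro w hw
    constructor
    · intro hd
      obtain ⟨c, rfl⟩ := hd
      rw [norm_mul, hπ] at hw
      exact hmZ ⟨norm c, hw.symm⟩
    · intro hd
      obtain ⟨c, rfl⟩ := hd
      rw [norm_mul, hπc] at hw
      exact hmZ ⟨norm c, hw.symm⟩
  set F : ℕ × Es → Es := fun q => π ^ q.1 * conj π ^ (e - q.1) * q.2 with hF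
  have himg : sols (p ^ e * m) = F '' (Set.Iic e ×ˢ sols m) := by
    ext z
    constructor
    · intro hz
      have hz' : norm z = ((p ^ e * m : ℕ) : ℤ) := hz
      have hz0 : z ≠ 0 := by
        intro hh
        rw [hh] at hz'
        have h0 : (0 : ℤ) = ((p ^ e * m : ℕ) : ℤ) := by simpa [norm] using hz'
        have hcon : p ^ e * m = 0 := by exact_mod_cast h0.symm
        exact (Nat.mul_ne_zero (pow_ne_zero _ hp.ne_zero) hm0) hcon
      obtain ⟨i, u, hu, rfl⟩ := WfDvdMonoid.max_power_factor hz0 hπpr.irreducible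
      have hu0 : u ≠ 0 := fun h => hz0 (by rw [h, mul_zero])
      obtain ⟨j, w, hwc, rfl⟩ := WfDvdMonoid.max_power_factor hu0 hπcpr.irreducible
      have hwπ : ¬ π ∣ w := fun h => hu (h.mul_left _)
      have hnw : ¬ (p : ℤ) ∣ norm w := by
        intro hd
        have hdd : π ∣ w * conj w := by
          rw [mul_conj]
          obtain ⟨t, ht⟩ := hd
          rw [ht]
          have : π ∣ ((p : ℤ) : Es) := ⟨conj π, by rw [mul_conj, hπ]⟩
          push_cast
          exact (this.mul_right _)
        rcases hπpr.dvd_mul.mp hdd with h | h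
        · exact hwπ h
        · have h2 : conj π ∣ w := by simpa using conj_dvd_conj h
          exact hwc h2
      have heq : ((p : ℤ)) ^ (i + j) * norm w = ((p : ℤ)) ^ e * (m : ℤ) := by
        have h1 : norm (π ^ i * (conj π ^ j * w)) = ((p ^ e * m : ℕ) : ℤ) := hz'
        rw [norm_mul, norm_mul, norm_pow, norm_pow, hπ, hπc] at h1
        push_cast at h1
        rw [pow_add]
        linear_combination h1
      obtain ⟨hij, hnwm⟩ := pow_mul_eq_pow_mul hpZ hnw hmZ heq
      refine ⟨(i, w), ⟨?_, hnwm⟩, ?_⟩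
      · simp only [Set.mem_Iic]; omega
      · simp only [hF]
        have : e - i = j := by omega
        rw [this]
        ring
    · rintro ⟨⟨i, w⟩, ⟨hi, hw⟩, rfl⟩
      simp only [Set.mem_Iic] at hi
      have hw' : norm w = (m : ℤ) := hw
      show norm _ = _
      simp only [hF]
      rw [norm_mul, norm_mul, norm_pow, norm_pow, hπ, hπc, hw']
      rw [← pow_add]
      have : i + (e - i) = e := by omega
      rw [this]
      push_cast
      ring
  have hinj : Set.InjOn F (Set.Iic e ×ˢ sols m) := by
    rintro ⟨i, w⟩ ⟨hi, hw⟩ ⟨i', w'⟩ ⟨hi', hw'⟩ heq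
    simp only [Set.mem_Iic] at hi hi'
    have hw1 := hkey w hw
    have hw2 := hkey w' hw'
    simp only [hF] at heq
    have heq' : π ^ i * (conj π ^ (e - i) * w) = π ^ i' * (conj π ^ (e - i') * w') := by
      rw [← mul_assoc, ← mul_assoc]; exact heq
    have hnd1 : ¬ π ∣ conj π ^ (e - i) * w := by
      intro h
      rcases hπpr.dvd_mul.mp h with h | h
      · exact hnd (hπpr.dvd_of_dvd_pow h)
      · exact hw1.1 h
    have hnd2 : ¬ π ∣ conj π ^ (e - i') * w' := by
      intro h
      rcases hπpr.dvd_mul.mp h with h | h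
      · exact hnd (hπpr.dvd_of_dvd_pow h)
      · exact hw2.1 h
    obtain ⟨hii, hrest⟩ := pow_mul_eq_pow_mul hπpr hnd1 hnd2 heq'
    have hii' : i = i' := hii
    subst hii'
    obtain ⟨-, hww⟩ := pow_mul_eq_pow_mul hπcpr hw1.2 hw2.2 hrest
    simp [hww]
  rw [himg, Set.ncard_image_of_injOn hinj]
  -- ncard of product
  have hprod : (Set.Iic e ×ˢ sols m).ncard = (Set.Iic (e : ℕ)).ncard * (sols m).ncard := by
    rw [← Nat.card_coe_set_eq, ← Nat.card_coe_set_eq, ← Nat.card_coe_set_eq]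
    rw [Nat.card_congr (Equiv.Set.prod _ _), Nat.card_prod]
  rw [hprod]
  congr 1
  rw [← Finset.coe_Iic, Set.ncard_coe_finset]
  exact Nat.card_Iic e

/-- Base case: six units. -/
theorem ncard_sols_one : (sols 1).ncard = 6 := by
  have hset : sols 1 = ↑({⟨1,0⟩, ⟨-1,0⟩, ⟨0,1⟩, ⟨0,-1⟩, ⟨1,-1⟩, ⟨-1,1⟩} : Finset Es) := by
    ext z
    simp only [sols, Set.mem_setOf_eq, Finset.coe_insert, Set.mem_insert_iff,
      Finset.coe_singleton, Set.mem_singleton_iff]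
    constructor
    · intro h
      have h1 : norm z = 1 := by exact_mod_cast h
      exact eq_of_norm_eq_one h1
    · intro h
      rcases h with rfl | rfl | rfl | rfl | rfl | rfl <;> simp [norm]
  rw [hset, Set.ncard_coe_finset]
  decide

end Es

open Finset

/-- The character mod 3. -/
def chi (d : ℕ) : ℤ := if d % 3 = 1 then 1 else if d % 3 = 2 then -1 else 0

/-- Divisor sum of the character. -/
def A (K : ℕ) : ℤ := ∑ d ∈ K.divisors, chi d

theorem chi_mul (m n : ℕ) : chi (m * n) = chi m * chi n := by
  have hm : m % 3 = 0 ∨ m % 3 = 1 ∨ m % 3 = 2 := by omega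
  have hn : n % 3 = 0 ∨ n % 3 = 1 ∨ n % 3 = 2 := by omega
  have hmn : (m * n) % 3 = (m % 3) * (n % 3) % 3 := Nat.mul_mod m n 3
  rcases hm with h1 | h1 | h1 <;> rcases hn with h2 | h2 | h2 <;>
    simp [chi, hmn, h1, h2]

theorem A_one : A 1 = 1 := by simp [A, chi]

/-- χ' as an arithmetic function. -/
def chiA : ArithmeticFunction ℤ := ⟨chi, by simp [chi]⟩

theorem chiA_mult : chiA.IsMultiplicative :=
  ⟨by simp [chiA, chi], fun {m n} _ => chi_mul m n⟩

theorem A_eq_zeta_mul (K : ℕ) : A K = ((ArithmeticFunction.zeta : ArithmeticFunction ℕ) * chiA) K := by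
  rw [ArithmeticFunction.coe_zeta_mul_apply]
  rfl

theorem A_mul_coprime {a b : ℕ} (h : Nat.Coprime a b) : A (a * b) = A a * A b := by
  rw [A_eq_zeta_mul, A_eq_zeta_mul, A_eq_zeta_mul]
  exact (ArithmeticFunction.isMultiplicative_zeta.natCast.mul chiA_mult).2 h

theorem A_three (n : ℕ) (hn : n ≠ 0) : A (3 * n) = A n := by
  have hfil : ∀ N : ℕ, N ≠ 0 → A N = ∑ d ∈ N.divisors.filter (fun d => ¬ (3 ∣ d)), chi d := by
    intro N hN
    rw [A]
    refine (Finset.sum_filter_of_ne ?_).symm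
    intro x hx hchi h3
    obtain ⟨c, rfl⟩ := h3
    simp [chi, Nat.mul_mod_right] at hchi
  rw [hfil _ (by positivity), hfil _ hn]
  congr 1
  ext d
  simp only [Finset.mem_filter, Nat.mem_divisors]
  constructor
  · rintro ⟨⟨hd, _⟩, h3⟩
    refine ⟨⟨?_, hn⟩, h3⟩
    have hcop : Nat.Coprime d 3 := Nat.Coprime.symm ((Nat.Prime.coprime_iff_not_dvd (by norm_num)).mpr h3)
    exact Nat.Coprime.dvd_of_dvd_mul_left hcop hd
  · rintro ⟨⟨hd, _⟩, h3⟩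
    exact ⟨⟨hd.mul_left 3, by positivity⟩, h3⟩

theorem chi_pow_one_mod (p : ℕ) (h : p % 3 = 1) (i : ℕ) : chi (p ^ i) = 1 := by
  have : p ^ i % 3 = 1 := by
    rw [Nat.pow_mod, h]
    simp
  simp [chi, this]

theorem pow_two_mod_three (p : ℕ) (h : p % 3 = 2) (i : ℕ) :
    p ^ i % 3 = (if i % 2 = 0 then 1 else 2) := by
  induction i with
  | zero => simp
  | succ j ih =>
      rw [pow_succ, Nat.mul_mod, ih, h]
      rcases Nat.even_or_odd j with hj | hj
      · have h0 : j % 2 = 0 := Nat.even_iff.mp hj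
        have h1 : (j + 1) % 2 = 1 := by omega
        simp [h0, h1]
      · have h0 : j % 2 = 1 := Nat.odd_iff.mp hj
        have h1 : (j + 1) % 2 = 0 := by omega
        simp [h0, h1]

theorem A_pow_split {p : ℕ} (hp : p.Prime) (h3 : p % 3 = 1) (e : ℕ) :
    A (p ^ e) = e + 1 := by
  rw [A, Nat.sum_divisors_prime_pow hp]
  have : ∀ i ∈ Finset.range (e + 1), chi (p ^ i) = 1 := fun i _ => chi_pow_one_mod p h3 i
  rw [Finset.sum_congr rfl this]
  simp

theorem A_pow_inert {p : ℕ} (hp : p.Prime) (h3 : p % 3 = 2) (e : ℕ) :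
    A (p ^ e) = if e % 2 = 0 then 1 else 0 := by
  rw [A, Nat.sum_divisors_prime_pow hp]
  have hterm : ∀ i, chi (p ^ i) = (if i % 2 = 0 then 1 else -1) := by
    intro i
    have := pow_two_mod_three p h3 i
    rcases Nat.even_or_odd i with hi | hi
    · have h0 : i % 2 = 0 := Nat.even_iff.mp hi
      simp [chi, this, h0]
    · have h0 : i % 2 = 1 := Nat.odd_iff.mp hi
      simp [chi, this, h0]
  induction e with
  | zero => simp [hterm]
  | succ j ih =>
      rw [Finset.sum_range_succ, ih, hterm]
      rcases Nat.even_or_odd j with hj | hj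
      · have h0 : j % 2 = 0 := Nat.even_iff.mp hj
        have h1 : (j + 1) % 2 = 1 := by omega
        simp [h0, h1]
      · have h0 : j % 2 = 1 := Nat.odd_iff.mp hj
        have h1 : (j + 1) % 2 = 0 := by omega
        simp [h0, h1]

theorem main_count : ∀ K : ℕ, 0 < K → ((Es.sols K).ncard : ℤ) = 6 * A K := by
  intro K
  induction K using Nat.strong_induction_on with
  | _ K ih =>
    intro hK
    by_cases hK1 : K = 1
    · subst hK1
      rw [Es.ncard_sols_one, A_one]
      norm_num
    by_cases h3 : 3 ∣ K
    · obtain ⟨n, rfl⟩ := h3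
      have hn : 0 < n := by omega
      rw [Es.ncard_sols_three n, A_three n hn.ne']
      exact ih n (by omega) hn
    · have hp : K.minFac.Prime := Nat.minFac_prime hK1
      set p := K.minFac with hp_def
      have hpd : p ∣ K := Nat.minFac_dvd K
      set e := K.factorization p with he
      set m := K / p ^ e with hm_def
      have hKe : p ^ e * m = K := Nat.ordProj_mul_ordCompl_eq_self K p
      have hm : ¬ p ∣ m := Nat.not_dvd_ordCompl hp hK.ne'
      have hm0 : 0 < m := Nat.ordCompl_pos p hK.ne'
      have he1 : 1 ≤ e := hp.factorization_pos_of_dvd hK.ne' hpd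
      have hmK : m < K := by
        have hpe : 2 ≤ p ^ e := by
          calc 2 ≤ p := hp.two_le
          _ ≤ p ^ e := Nat.le_self_pow (by omega : e ≠ 0) p
        nlinarith [hKe, hm0, hpe]
      have hcop : Nat.Coprime (p ^ e) m :=
        Nat.Coprime.pow_left _ ((Nat.Prime.coprime_iff_not_dvd hp).mpr hm)
      have hA : A K = A (p ^ e) * A m := by rw [← hKe]; exact A_mul_coprime hcop
      have hihm := ih m hmK hm0
      have hp3 : p % 3 = 1 ∨ p % 3 = 2 := by
        have hne3 : p ≠ 3 := fun h => h3 (h ▸ hpd)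
        have h2le := hp.two_le
        rcases (by omega : p % 3 = 0 ∨ p % 3 = 1 ∨ p % 3 = 2) with h | h | h
        · exfalso
          have h3p : 3 ∣ p := Nat.dvd_of_mod_eq_zero h
          have := Nat.Prime.eq_one_or_self_of_dvd hp 3 h3p
          omega
        · left; exact h
        · right; exact h
      rcases hp3 with h1 | h1
      · obtain ⟨π, hπ⟩ := Es.exists_norm_eq_of_one_mod_three hp h1
        have hsplit := Es.ncard_sols_split hp h1 hπ e m hm
        rw [hA, ← hKe, hsplit, A_pow_split hp h1]
        push_cast
        rw [hihm]
        ring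
      · rcases Nat.even_or_odd e with he2 | he2
        · obtain ⟨k, hk⟩ := he2
          have hk2 : e = 2 * k := by omega
          rw [hA, ← hKe, hk2, Es.ncard_sols_inert_even hp h1 k m hm, A_pow_inert hp h1]
          simp only [Nat.mul_mod_right, if_pos rfl]
          rw [hihm]
          simp
        · obtain ⟨k, hk⟩ := he2
          rw [hA, ← hKe, hk, Es.sols_inert_odd hp h1 k m hm, A_pow_inert hp h1]
          have h21 : (2 * k + 1) % 2 = 1 := by omega
          rw [h21]
          simp [Set.ncard_empty]

theorem A_eq_cards (K : ℕ) :
    A K = ((K.divisors.filter (fun d => d % 3 = 1)).card : ℤ)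
          - ((K.divisors.filter (fun d => d % 3 = 2)).card : ℤ) := by
  rw [A]
  have hterm : ∀ d, chi d = (if d % 3 = 1 then (1:ℤ) else 0) - (if d % 3 = 2 then (1:ℤ) else 0) := by
    intro d
    have : d % 3 = 0 ∨ d % 3 = 1 ∨ d % 3 = 2 := by omega
    rcases this with h | h | h <;> simp [chi, h]
  rw [Finset.sum_congr rfl (fun d _ => hterm d), Finset.sum_sub_distrib,
    Finset.sum_boole, Finset.sum_boole]

/-- The number of representations of a positive integer `K` by the quadratic form
`x² + xy + y²` over `ℤ²` equals `6 * (N₁(K) - N₂(K))` where `Nⱼ(K)` counts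
divisors of `K` congruent to `j` mod 3. -/
theorem hexagonal_form_representations (K : ℕ) (hK : 0 < K) :
    (({p : ℤ × ℤ | p.1 ^ 2 + p.1 * p.2 + p.2 ^ 2 = (K : ℤ)}.ncard : ℤ)) =
      6 * (((K.divisors.filter (fun d => d % 3 = 1)).card : ℤ)
            - ((K.divisors.filter (fun d => d % 3 = 2)).card : ℤ)) := by
  have himg : Es.sols K =
      (fun q : ℤ × ℤ => (⟨q.1, q.2⟩ : Es)) '' {p : ℤ × ℤ | p.1 ^ 2 + p.1 * p.2 + p.2 ^ 2 = (K : ℤ)} := by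
    ext z
    constructor
    · intro hz
      refine ⟨(z.re, z.im), ?_, by ext <;> rfl⟩
      have : z.re * z.re + z.re * z.im + z.im * z.im = (K : ℤ) := hz
      simp only [Set.mem_setOf_eq]
      nlinarith [this]
    · rintro ⟨⟨x, y⟩, hxy, rfl⟩
      simp only [Set.mem_setOf_eq] at hxy
      show Es.norm _ = _
      simp only [Es.norm]
      nlinarith [hxy]
  have hinj : Function.Injective (fun q : ℤ × ℤ => (⟨q.1, q.2⟩ : Es)) := by
    rintro ⟨a, b⟩ ⟨c, d⟩ h
    have h1 := congrArg Es.re h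
    have h2 := congrArg Es.im h
    simp at h1 h2
    simp [h1, h2]
  have hcard : ({p : ℤ × ℤ | p.1 ^ 2 + p.1 * p.2 + p.2 ^ 2 = (K : ℤ)}).ncard = (Es.sols K).ncard := by
    rw [himg, Set.ncard_image_of_injective _ hinj]
  rw [hcard, main_count K hK, A_eq_cards]
end

section
/- If ψ : ℝ → ℂ is twice differentiable, k ∈ ℤ², Ω a real 2×2 matrix, and Ψ(q₀,q₁,q₂) = exp(i(k₁(ω₁¹q₁+ω₁²q₂) + k₂(ω₂¹q₁+ω₂²q₂))) ψ(q₀), then −ΔΨ = E Ψ, where Δ = A∂₀² + ∂₁² + ∂₂² + (B−1)(cos q₀ ∂₁ − sin q₀ ∂₂)², if and only if −A ψ'' + [Q(k) + (B−1)((ω₁¹k₁+ω₂¹k₂)cos q₀ − (ω₁²k₁+ω₂²k₂)sin q₀)²]ψ = E ψ, where Q(k) = (ω₁¹k₁+ω₂¹k₂)² + (ω₁²k₁+ω₂²k₂)². -/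
noncomputable section

open Real Complex

/-- Second partial derivatives of a complex-valued function on `ℝ³` in the
directions of the coordinate axes. -/
def D0sq (F : ℝ × ℝ × ℝ → ℂ) (q : ℝ × ℝ × ℝ) : ℂ :=
  fderiv ℝ (fun q' => fderiv ℝ F q' (1, 0, 0)) q (1, 0, 0)
def D1 (F : ℝ × ℝ × ℝ → ℂ) (q : ℝ × ℝ × ℝ) : ℂ := fderiv ℝ F q (0, 1, 0)
def D2 (F : ℝ × ℝ × ℝ → ℂ) (q : ℝ × ℝ × ℝ) : ℂ := fderiv ℝ F q (0, 0, 1)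

/-- The Laplace–Beltrami operator on the Bianchi torus:
`Δ = A ∂₀² + ∂₁² + ∂₂² + (B-1)(cos q₀ ∂₁ - sin q₀ ∂₂)²`. -/
def LapB (A B : ℝ) (F : ℝ × ℝ × ℝ → ℂ) (q : ℝ × ℝ × ℝ) : ℂ :=
  (A : ℂ) * D0sq F q + D1 (D1 F) q + D2 (D2 F) q
    + ((B : ℂ) - 1) *
      ((fun G q' => (Real.cos q'.1 : ℂ) * D1 G q' - (Real.sin q'.1 : ℂ) * D2 G q')
        ((fun q' => (Real.cos q'.1 : ℂ) * D1 F q' - (Real.sin q'.1 : ℂ) * D2 F q')) q)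

namespace SepAux

def P (c s : ℝ) (q : ℝ × ℝ × ℝ) : ℂ :=
  Complex.exp (Complex.I * ((c : ℂ) * q.2.1 + (s : ℂ) * q.2.2))

lemma hasDerivAt_ofReal (t : ℝ) : HasDerivAt (fun x : ℝ => (x : ℂ)) 1 t := by
  exact Complex.ofRealCLM.hasDerivAt (x := t)

lemma shape_diff (c s : ℝ) {f : ℝ → ℂ} (hf : Differentiable ℝ f) :
    Differentiable ℝ (fun q : ℝ × ℝ × ℝ => P c s q * f q.1) := by
  have h1 : Differentiable ℝ (fun q : ℝ × ℝ × ℝ => (q.2.1 : ℂ)) :=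
    Complex.ofRealCLM.differentiable.comp (Differentiable.fst differentiable_snd)
  have h2 : Differentiable ℝ (fun q : ℝ × ℝ × ℝ => (q.2.2 : ℂ)) :=
    Complex.ofRealCLM.differentiable.comp (Differentiable.snd differentiable_snd)
  exact ((((h1.const_mul _).add (h2.const_mul _)).const_mul _).cexp).mul
    (hf.comp differentiable_fst)

lemma fderiv_line (F : ℝ × ℝ × ℝ → ℂ) (q v : ℝ × ℝ × ℝ) (hF : DifferentiableAt ℝ F q) :
    fderiv ℝ F q v = deriv (fun t : ℝ => F (q + t • v)) 0 := by
  have hγ : HasDerivAt (fun t : ℝ => q + t • v) v 0 := by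
    simpa using ((hasDerivAt_id (0 : ℝ)).smul_const v).const_add q
  have hF' : HasFDerivAt F (fderiv ℝ F q) ((fun t : ℝ => q + t • v) 0) := by
    simpa using hF.hasFDerivAt
  have := hF'.comp_hasDerivAt 0 hγ
  exact this.deriv.symm

lemma shape_d0 (c s : ℝ) (f : ℝ → ℂ) (hf : Differentiable ℝ f) (q : ℝ × ℝ × ℝ) :
    fderiv ℝ (fun q => P c s q * f q.1) q (1, 0, 0) = P c s q * deriv f q.1 := by
  rw [fderiv_line _ _ _ (shape_diff c s hf q)]
  have h1 : ∀ t : ℝ, q + t • ((1 : ℝ), (0 : ℝ), (0 : ℝ)) = (q.1 + t, q.2.1, q.2.2) := by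
    intro t; simp [Prod.ext_iff]
  simp only [h1]
  have hP : ∀ t : ℝ, P c s (q.1 + t, q.2.1, q.2.2) = P c s q := fun t => rfl
  simp only [hP]
  have h0 : HasDerivAt f (deriv f q.1) (q.1 + 0) := by
    simpa using (hf q.1).hasDerivAt
  have hfd : HasDerivAt (fun t : ℝ => f (q.1 + t)) (deriv f q.1) 0 :=
    h0.comp_const_add q.1 0
  exact (hfd.const_mul (P c s q)).deriv

lemma shape_d1 (c s : ℝ) (f : ℝ → ℂ) (hf : Differentiable ℝ f) (q : ℝ × ℝ × ℝ) :
    D1 (fun q => P c s q * f q.1) q = Complex.I * c * (P c s q * f q.1) := by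
  unfold D1
  rw [fderiv_line _ _ _ (shape_diff c s hf q)]
  have h1 : ∀ t : ℝ, q + t • ((0 : ℝ), (1 : ℝ), (0 : ℝ)) = (q.1, q.2.1 + t, q.2.2) := by
    intro t; simp [Prod.ext_iff]
  simp only [h1]
  have hre : HasDerivAt (fun t : ℝ => ((q.2.1 : ℂ) + (t : ℂ))) 1 0 :=
    (hasDerivAt_ofReal 0).const_add _
  have hin : HasDerivAt
      (fun t : ℝ => Complex.I * ((c : ℂ) * ((q.2.1 : ℂ) + (t : ℂ)) + (s : ℂ) * (q.2.2 : ℂ)))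
      (Complex.I * ((c : ℂ) * 1)) 0 :=
    ((hre.const_mul (c : ℂ)).add_const ((s : ℂ) * (q.2.2 : ℂ))).const_mul Complex.I
  have key := (hin.cexp.mul_const (f q.1)).deriv
  have hfun : (fun t : ℝ => P c s (q.1, q.2.1 + t, q.2.2) * f q.1)
      = fun t : ℝ => Complex.exp
        (Complex.I * ((c : ℂ) * ((q.2.1 : ℂ) + (t : ℂ)) + (s : ℂ) * (q.2.2 : ℂ))) * f q.1 := by
    funext t; simp [P]
  rw [hfun, key, P]
  push_cast
  ring_nf

lemma shape_d2 (c s : ℝ) (f : ℝ → ℂ) (hf : Differentiable ℝ f) (q : ℝ × ℝ × ℝ) :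
    D2 (fun q => P c s q * f q.1) q = Complex.I * s * (P c s q * f q.1) := by
  unfold D2
  rw [fderiv_line _ _ _ (shape_diff c s hf q)]
  have h1 : ∀ t : ℝ, q + t • ((0 : ℝ), (0 : ℝ), (1 : ℝ)) = (q.1, q.2.1, q.2.2 + t) := by
    intro t; simp [Prod.ext_iff]
  simp only [h1]
  have hre : HasDerivAt (fun t : ℝ => ((q.2.2 : ℂ) + (t : ℂ))) 1 0 :=
    (hasDerivAt_ofReal 0).const_add _
  have hin : HasDerivAt
      (fun t : ℝ => Complex.I * ((c : ℂ) * (q.2.1 : ℂ) + (s : ℂ) * ((q.2.2 : ℂ) + (t : ℂ))))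
      (Complex.I * ((s : ℂ) * 1)) 0 := by
    simpa using ((hre.const_mul (s : ℂ)).const_add ((c : ℂ) * (q.2.1 : ℂ))).const_mul Complex.I
  have key := (hin.cexp.mul_const (f q.1)).deriv
  have hfun : (fun t : ℝ => P c s (q.1, q.2.1, q.2.2 + t) * f q.1)
      = fun t : ℝ => Complex.exp
        (Complex.I * ((c : ℂ) * (q.2.1 : ℂ) + (s : ℂ) * ((q.2.2 : ℂ) + (t : ℂ)))) * f q.1 := by
    funext t; simp [P]
  rw [hfun, key, P]
  push_cast
  ring_nf

end SepAux

/-- Separation of variables: `Ψ(q) = e^{i(k,Ωq)} ψ(q₀)` is an eigenfunction of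
the Laplace–Beltrami operator, `-ΔΨ = E Ψ`, if and only if `ψ` satisfies the
(shifted) Mathieu equation
`-A ψ'' + [Q(k) + (B-1)((ω₁¹k₁+ω₂¹k₂)cos x - (ω₁²k₁+ω₂²k₂)sin x)²] ψ = E ψ`,
where `Q(k) = (ω₁¹k₁+ω₂¹k₂)² + (ω₁²k₁+ω₂²k₂)²`. -/
theorem separation_of_variables (A B E : ℝ) (ω11 ω12 ω21 ω22 : ℝ) (k₁ k₂ : ℤ)
    (ψ : ℝ → ℂ) (hψ : ContDiff ℝ 2 ψ) :
    let c : ℝ := ω11 * k₁ + ω21 * k₂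
    let s : ℝ := ω12 * k₁ + ω22 * k₂
    let Q : ℝ := c ^ 2 + s ^ 2
    let Ψ : ℝ × ℝ × ℝ → ℂ := fun q =>
      Complex.exp (Complex.I * ((k₁ : ℂ) * ((ω11 : ℂ) * q.2.1 + (ω12 : ℂ) * q.2.2)
        + (k₂ : ℂ) * ((ω21 : ℂ) * q.2.1 + (ω22 : ℂ) * q.2.2))) * ψ q.1
    ((∀ q : ℝ × ℝ × ℝ, -LapB A B Ψ q = (E : ℂ) * Ψ q) ↔
      (∀ x : ℝ, -(A : ℂ) * deriv (deriv ψ) x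
        + ((Q : ℂ) + ((B : ℂ) - 1) *
            (((c : ℂ) * Real.cos x - (s : ℂ) * Real.sin x) ^ 2)) * ψ x
        = (E : ℂ) * ψ x)) := by
  intro c s Q Ψ
  have hc : c = ω11 * k₁ + ω21 * k₂ := rfl
  have hs : s = ω12 * k₁ + ω22 * k₂ := rfl
  have hQ : Q = c ^ 2 + s ^ 2 := rfl
  have hψ1 : Differentiable ℝ ψ := hψ.differentiable (by norm_num)
  have hdψ : Differentiable ℝ (deriv ψ) :=
    (contDiff_succ_iff_deriv.mp (show ContDiff ℝ ((1 : ℕ) + 1) ψ by exact_mod_cast hψ)).2.2.differentiable (by norm_num)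
  have hΨ : Ψ = fun q => SepAux.P c s q * ψ q.1 := by
    funext q
    have harg : (Complex.I * ((k₁ : ℂ) * ((ω11 : ℂ) * q.2.1 + (ω12 : ℂ) * q.2.2)
        + (k₂ : ℂ) * ((ω21 : ℂ) * q.2.1 + (ω22 : ℂ) * q.2.2)))
        = Complex.I * ((c : ℂ) * q.2.1 + (s : ℂ) * q.2.2) := by
      rw [hc, hs]; push_cast; ring
    show Complex.exp _ * ψ q.1 = SepAux.P c s q * ψ q.1
    rw [harg]; rfl
  have hD1Ψ : D1 Ψ = fun q => SepAux.P c s q * (Complex.I * (c : ℂ) * ψ q.1) := by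
    funext q
    rw [hΨ, SepAux.shape_d1 c s ψ hψ1 q]
    ring
  have hD2Ψ : D2 Ψ = fun q => SepAux.P c s q * (Complex.I * (s : ℂ) * ψ q.1) := by
    funext q
    rw [hΨ, SepAux.shape_d2 c s ψ hψ1 q]
    ring
  have hgdiff : Differentiable ℝ (fun x : ℝ => (Complex.I * (c : ℂ) * (Real.cos x : ℂ)
      - Complex.I * (s : ℂ) * (Real.sin x : ℂ)) * ψ x) := by
    apply Differentiable.mul _ hψ1
    exact ((Complex.ofRealCLM.differentiable.comp Real.differentiable_cos).const_mul _).sub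
      ((Complex.ofRealCLM.differentiable.comp Real.differentiable_sin).const_mul _)
  have hG : (fun q' : ℝ × ℝ × ℝ => (Real.cos q'.1 : ℂ) * D1 Ψ q' - (Real.sin q'.1 : ℂ) * D2 Ψ q')
      = fun q' => SepAux.P c s q' * ((Complex.I * (c : ℂ) * (Real.cos q'.1 : ℂ)
          - Complex.I * (s : ℂ) * (Real.sin q'.1 : ℂ)) * ψ q'.1) := by
    funext q'
    simp only [hD1Ψ, hD2Ψ]
    ring
  have hLap : ∀ q : ℝ × ℝ × ℝ, LapB A B Ψ q
      = SepAux.P c s q * ((A : ℂ) * deriv (deriv ψ) q.1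
        - ((Q : ℂ) + ((B : ℂ) - 1)
            * (((c : ℂ) * Real.cos q.1 - (s : ℂ) * Real.sin q.1) ^ 2)) * ψ q.1) := by
    intro q
    have e0 : D0sq Ψ q = SepAux.P c s q * deriv (deriv ψ) q.1 := by
      unfold D0sq
      have h1 : (fun q' => fderiv ℝ Ψ q' (1, 0, 0))
          = fun q' => SepAux.P c s q' * deriv ψ q'.1 := by
        funext q'; rw [hΨ]; exact SepAux.shape_d0 c s ψ hψ1 q'
      rw [h1]
      exact SepAux.shape_d0 c s (deriv ψ) hdψ q
    have e1 : D1 (D1 Ψ) q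
        = Complex.I * c * (SepAux.P c s q * (Complex.I * (c : ℂ) * ψ q.1)) := by
      rw [hD1Ψ]
      exact SepAux.shape_d1 c s (fun x => Complex.I * (c : ℂ) * ψ x) (hψ1.const_mul _) q
    have e2 : D2 (D2 Ψ) q
        = Complex.I * s * (SepAux.P c s q * (Complex.I * (s : ℂ) * ψ q.1)) := by
      rw [hD2Ψ]
      exact SepAux.shape_d2 c s (fun x => Complex.I * (s : ℂ) * ψ x) (hψ1.const_mul _) q
    have eB1 : D1 (fun q' => SepAux.P c s q' * ((Complex.I * (c : ℂ) * (Real.cos q'.1 : ℂ)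
          - Complex.I * (s : ℂ) * (Real.sin q'.1 : ℂ)) * ψ q'.1)) q
        = Complex.I * c * (SepAux.P c s q * ((Complex.I * (c : ℂ) * (Real.cos q.1 : ℂ)
          - Complex.I * (s : ℂ) * (Real.sin q.1 : ℂ)) * ψ q.1)) :=
      SepAux.shape_d1 c s _ hgdiff q
    have eB2 : D2 (fun q' => SepAux.P c s q' * ((Complex.I * (c : ℂ) * (Real.cos q'.1 : ℂ)
          - Complex.I * (s : ℂ) * (Real.sin q'.1 : ℂ)) * ψ q'.1)) q
        = Complex.I * s * (SepAux.P c s q * ((Complex.I * (c : ℂ) * (Real.cos q.1 : ℂ)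
          - Complex.I * (s : ℂ) * (Real.sin q.1 : ℂ)) * ψ q.1)) :=
      SepAux.shape_d2 c s _ hgdiff q
    simp only [LapB, hG, e0, e1, e2, eB1, eB2]
    rw [hQ]
    push_cast [-Complex.ofReal_cos, -Complex.ofReal_sin]
    linear_combination (SepAux.P c s q * ψ q.1 * ((c : ℂ) ^ 2 + (s : ℂ) ^ 2
      + ((B : ℂ) - 1) * ((c : ℂ) * (Real.cos q.1 : ℂ) - (s : ℂ) * (Real.sin q.1 : ℂ)) ^ 2))
      * Complex.I_mul_I
  constructor
  · intro h x
    have h1 := h (x, 0, 0)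
    rw [hLap (x, 0, 0)] at h1
    have hP1 : SepAux.P c s (x, 0, 0) = 1 := by simp [SepAux.P]
    have hΨ1 : Ψ (x, 0, 0) = ψ x := by
      rw [hΨ]
      show SepAux.P c s (x, 0, 0) * ψ x = ψ x
      rw [hP1, one_mul]
    rw [hΨ1, hP1] at h1
    linear_combination h1
  · intro h q
    rw [hLap q, hΨ]
    linear_combination SepAux.P c s q * h q.1
end
end
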